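/- arXiv:1006.3055 — 5 statements merged into one kernel-verified Lean document; each statement's English description precedes it below -/
import Mathlib

section
/- Let K be a simplicial complex with finitely many faces in a finite-dimensional real vector space, let L be a subcomplex of K, and set X = |K| and Y = |L| ⊆ X. Suppose that X \ Y is dense in X and that Y does not separate any connected open subset of X (i.e., for every connected open subset U of X, the set U \ Y is connected). Then for every basepoint x₀ ∈ X \ Y, the homomorphism π₁(X \ Y, x₀) → π₁(X, x₀) induced by the inclusion X \ Y ↪ X is surjective. -/
open CategoryTheory

/-- The homomorphism of fundamental groups induced by a continuous map `f` with `f x = y`. -/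
noncomputable def inducedPi1 {X Y : Type} [TopologicalSpace X] [TopologicalSpace Y]
    (f : C(X, Y)) (x : X) (y : Y) (h : f x = y) :
    FundamentalGroup X x →* FundamentalGroup Y y := by
  subst h
  exact (FundamentalGroupoid.fundamentalGroupoidFunctor.map
    (X := TopCat.of X) (Y := TopCat.of Y) (TopCat.ofHom f)).mapEnd ⟨x⟩


section AuxAll

open CategoryTheory unitInterval Set

set_option maxHeartbeats 1000000

noncomputable section Aux

attribute [local instance] Path.Homotopic.setoid

variable {Z : Type*} [TopologicalSpace Z]

/-- The subpath of `γ` from time `u` to time `v` (affinely reparametrized, via `extend`). -/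
def pseg {a b : Z} (γ : Path a b) (u v : ℝ) {x y : Z} (hx : γ.extend u = x)
    (hy : γ.extend v = y) : Path x y where
  toFun s := γ.extend (u + s * (v - u))
  continuous_toFun := γ.continuous_extend.comp (by fun_prop)
  source' := by simpa using hx
  target' := by
    have : u + ((1 : I) : ℝ) * (v - u) = v := by norm_num
    simpa [this] using hy

@[simp] lemma pseg_apply {a b : Z} (γ : Path a b) (u v : ℝ) {x y : Z} (hx : γ.extend u = x)
    (hy : γ.extend v = y) (s : I) : pseg γ u v hx hy s = γ.extend (u + s * (v - u)) := rfl

/-- Straight-line-reparametrization homotopy: two paths that are both of the form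
`γ.extend ∘ f` are homotopic when the reparametrizations agree at the endpoints. -/
theorem homotopic_of_extend_comp {a b x y : Z} (γ : Path a b) (f g : I → ℝ)
    (hf : Continuous f) (hg : Continuous g) (h0 : f 0 = g 0) (h1 : f 1 = g 1)
    (p q : Path x y) (hp : ∀ s, p s = γ.extend (f s)) (hq : ∀ s, q s = γ.extend (g s)) :
    p.Homotopic q := by
  refine ⟨⟨⟨⟨fun z => γ.extend ((1 - (z.1 : ℝ)) * f z.2 + (z.1 : ℝ) * g z.2), ?_⟩, ?_, ?_⟩, ?_⟩⟩
  · exact γ.continuous_extend.comp (by fun_prop)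
  · intro s; simp [hp s]
  · intro s; simp [hq s]
  · intro t s hs
    rcases hs with hs | hs
    · subst hs
      have h : (1 - (t : ℝ)) * f 0 + (t : ℝ) * g 0 = f 0 := by rw [← h0]; ring
      show γ.extend ((1 - (t : ℝ)) * f 0 + (t : ℝ) * g 0) = _
      rw [h]
      exact (hp 0).symm
    · simp only [mem_singleton_iff] at hs; subst hs
      have h : (1 - (t : ℝ)) * f 1 + (t : ℝ) * g 1 = f 1 := by rw [← h1]; ring
      show γ.extend ((1 - (t : ℝ)) * f 1 + (t : ℝ) * g 1) = _
      rw [h]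
      exact (hp 1).symm


/-- Concatenation of consecutive subpaths is homotopic to the longer subpath. -/
theorem pseg_trans_pseg {a b : Z} (γ : Path a b) (u v w : ℝ) {x y z : Z}
    (hx : γ.extend u = x) (hy : γ.extend v = y) (hz : γ.extend w = z) :
    ((pseg γ u v hx hy).trans (pseg γ v w hy hz)).Homotopic (pseg γ u w hx hz) := by
  refine homotopic_of_extend_comp γ
    (fun s => if (s : ℝ) ≤ 1/2 then u + (2 * s) * (v - u) else v + (2 * s - 1) * (w - v))
    (fun s => u + s * (w - u)) ?_ (by fun_prop) (by norm_num) (by norm_num) _ _ ?_ (fun s => rfl)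
  · apply Continuous.if_le (by fun_prop) (by fun_prop) (by fun_prop) continuous_const
    intro s hs
    rw [hs]; ring
  · intro s
    rw [Path.trans_apply]
    split_ifs with h
    · norm_num [pseg, h]
    · norm_num [pseg, h]

theorem homotopic_pseg_zero_one {a b : Z} (γ : Path a b) {x y : Z}
    (hx : γ.extend 0 = x) (hy : γ.extend 1 = y) (p : Path x y) (hp : p = pseg γ 0 1 hx hy) :
    Path.Homotopic (γ.cast (by rw [← hx, γ.extend_zero]) (by rw [← hy, γ.extend_one])) p := by
  subst hp
  refine homotopic_of_extend_comp γ (fun s => (s : ℝ)) (fun s => 0 + s * (1 - 0))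
    (by fun_prop) (by fun_prop) (by norm_num) (by norm_num) _ _ ?_ (fun s => rfl)
  intro s
  rw [Path.cast_coe]
  exact (γ.extend_extends' s).symm

theorem trans_mem_of_mem {x y z : Z} {p : Path x y} {q : Path y z} {U : Set Z}
    (hp : ∀ s, p s ∈ U) (hq : ∀ s, q s ∈ U) : ∀ s, (p.trans q) s ∈ U := by
  intro s
  have : (p.trans q) s ∈ range (p.trans q) := mem_range_self s
  rw [Path.trans_range] at this
  rcases this with ⟨t, ht⟩ | ⟨t, ht⟩
  · rw [← ht]; exact hp t
  · rw [← ht]; exact hq t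

/-- Two paths in a subtype-space whose images lie in a simply connected subset are homotopic. -/
theorem homotopic_of_mem_simplyConnected {KS S : Set Z} [SimplyConnectedSpace ↥S]
    (hSK : S ⊆ KS) {x y : ↥KS} (p q : Path x y)
    (hp : ∀ s, (p s : Z) ∈ S) (hq : ∀ s, (q s : Z) ∈ S) : p.Homotopic q := by
  have hx : (x : Z) ∈ S := p.source ▸ hp 0
  have hy : (y : Z) ∈ S := p.target ▸ hp 1
  let j : C(↥S, ↥KS) := ⟨fun z => ⟨(z : Z), hSK z.2⟩, by fun_prop⟩
  let p' : Path (⟨(x : Z), hx⟩ : ↥S) ⟨(y : Z), hy⟩ :=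
    ⟨⟨fun s => ⟨(p s : Z), hp s⟩, by fun_prop⟩,
      by ext; simp, by ext; simp⟩
  let q' : Path (⟨(x : Z), hx⟩ : ↥S) ⟨(y : Z), hy⟩ :=
    ⟨⟨fun s => ⟨(q s : Z), hq s⟩, by fun_prop⟩,
      by ext; simp, by ext; simp⟩
  have h := SimplyConnectedSpace.paths_homotopic p' q'
  have hmap := h.map j
  have hp'' : p'.map j.continuous = p := by ext s; rfl
  have hq'' : q'.map j.continuous = q := by ext s; rfl
  rwa [hp'', hq''] at hmap

end Aux

noncomputable section Geom

open Geometry Metric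

variable {E : Type} [NormedAddCommGroup E] [NormedSpace ℝ E]
variable {K : Geometry.SimplicialComplex ℝ E}

theorem space_isClosed (hfin : K.faces.Finite) : IsClosed K.space :=
  Set.Finite.isClosed_biUnion hfin fun s _ => s.finite_toSet.isClosed_convexHull (𝕜 := ℝ)

theorem exists_star_radius (hfin : K.faces.Finite) (c : E) (r : ℝ) (hr : 0 < r) :
    ∃ ε, 0 < ε ∧ ε ≤ r ∧ StarConvex ℝ c (Metric.ball c ε ∩ K.space) := by
  classical
  set C : Set E := ⋃ s ∈ {s ∈ K.faces | c ∉ convexHull ℝ (s : Set E)}, convexHull ℝ (s : Set E)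
    with hC
  have hCclosed : IsClosed C :=
    Set.Finite.isClosed_biUnion (hfin.subset (Set.sep_subset _ _))
      fun s _ => s.finite_toSet.isClosed_convexHull (𝕜 := ℝ)
  have hcC : c ∉ C := by
    intro hc'
    rw [hC, Set.mem_iUnion₂] at hc'
    obtain ⟨s, ⟨_, hcs⟩, hmem⟩ := hc'
    exact hcs hmem
  obtain ⟨ε₀, hε₀, hball⟩ := Metric.mem_nhds_iff.mp (hCclosed.isOpen_compl.mem_nhds hcC)
  refine ⟨min ε₀ r, by positivity, min_le_right _ _, ?_⟩
  intro yy hy aa bb ha hb hab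
  obtain ⟨hyball, hyK⟩ := hy
  obtain ⟨s, hs, hys⟩ := SimplicialComplex.mem_space_iff.mp hyK
  have hcs : c ∈ convexHull ℝ (s : Set E) := by
    by_contra hcs
    have hyC : yy ∈ C := Set.mem_biUnion ⟨hs, hcs⟩ hys
    exact hball (Metric.ball_subset_ball (min_le_left _ _) hyball) hyC
  have hbb1 : bb ≤ 1 := by linarith
  refine ⟨?_, SimplicialComplex.convexHull_subset_space hs
    ((convex_convexHull ℝ (s : Set E)) hcs hys ha hb hab)⟩
  rw [Metric.mem_ball, dist_eq_norm]
  have hEq : aa • c + bb • yy - c = bb • (yy - c) := by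
    have : aa = 1 - bb := by linarith
    rw [this]; module
  rw [hEq, norm_smul, Real.norm_eq_abs, abs_of_nonneg hb]
  have hyc : ‖yy - c‖ < min ε₀ r := by rwa [Metric.mem_ball, dist_eq_norm] at hyball
  calc bb * ‖yy - c‖ ≤ 1 * ‖yy - c‖ := by
        apply mul_le_mul_of_nonneg_right hbb1 (norm_nonneg _)
    _ < min ε₀ r := by rwa [one_mul]

theorem starBall_pathConnected (c : ↥K.space) {ε : ℝ} (hε : 0 < ε)
    (h : StarConvex ℝ (c : E) (Metric.ball (c : E) ε ∩ K.space)) :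
    IsPathConnected (Metric.ball c ε : Set ↥K.space) := by
  refine ⟨c, Metric.mem_ball_self hε, ?_⟩
  intro y hy
  have hyS : (y : E) ∈ Metric.ball (c : E) ε ∩ K.space :=
    ⟨by rw [Metric.mem_ball, ← Subtype.dist_eq]; exact hy, y.2⟩
  have hmem : ∀ s : I, (1 - (s : ℝ)) • (c : E) + (s : ℝ) • (y : E) ∈
      Metric.ball (c : E) ε ∩ K.space := fun s =>
    h hyS (by have := s.2.2; linarith) s.2.1 (by ring)
  refine ⟨⟨⟨fun s => ⟨(1 - (s : ℝ)) • (c : E) + (s : ℝ) • (y : E), (hmem s).2⟩, ?_⟩, ?_, ?_⟩, ?_⟩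
  · apply Continuous.subtype_mk
    fun_prop
  · ext; simp
  · ext; simp
  · intro s
    rw [Metric.mem_ball, Subtype.dist_eq]
    have := (hmem s).1
    rwa [Metric.mem_ball] at this

theorem starBall_paths_homotopic (c : ↥K.space) {ε : ℝ} (hε : 0 < ε)
    (h : StarConvex ℝ (c : E) (Metric.ball (c : E) ε ∩ K.space))
    {x y : ↥K.space} (p q : Path x y)
    (hp : ∀ s, p s ∈ Metric.ball c ε) (hq : ∀ s, q s ∈ Metric.ball c ε) :
    p.Homotopic q := by
  haveI : ContractibleSpace ↥(Metric.ball (c : E) ε ∩ K.space) :=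
    h.contractibleSpace ⟨c, Metric.mem_ball_self hε, c.2⟩
  refine homotopic_of_mem_simplyConnected (S := Metric.ball (c : E) ε ∩ K.space)
    Set.inter_subset_right p q ?_ ?_
  · intro s
    exact ⟨by rw [Metric.mem_ball, ← Subtype.dist_eq]; exact hp s, (p s).2⟩
  · intro s
    exact ⟨by rw [Metric.mem_ball, ← Subtype.dist_eq]; exact hq s, (q s).2⟩

theorem K_locPathConnected (hfin : K.faces.Finite) : LocPathConnectedSpace ↥K.space := by
  refine LocPathConnectedSpace.of_bases
    (p := fun (x : ↥K.space) (ε : ℝ) =>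
      0 < ε ∧ StarConvex ℝ (x : E) (Metric.ball (x : E) ε ∩ K.space))
    (s := fun x ε => Metric.ball x ε) ?_ ?_
  · intro x
    constructor
    intro t
    constructor
    · intro ht
      obtain ⟨ε₀, hε₀, hsub⟩ := Metric.mem_nhds_iff.mp ht
      obtain ⟨ε, hε, hle, hstar⟩ := exists_star_radius hfin (x : E) ε₀ hε₀
      exact ⟨ε, ⟨hε, hstar⟩, (Metric.ball_subset_ball hle).trans hsub⟩
    · rintro ⟨ε, ⟨hε, _⟩, hsub⟩
      exact Filter.mem_of_superset (Metric.ball_mem_nhds _ hε) hsub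
  · rintro x ε ⟨hε, hstar⟩
    exact starBall_pathConnected x hε hstar

end Geom



section Assembly

attribute [local instance] Path.Homotopic.setoid

open CategoryTheory

theorem surjective_inducedPi1_of_key {X Y : Type} [TopologicalSpace X] [TopologicalSpace Y]
    (f : C(X, Y)) (x : X)
    (key : ∀ γ : Path (f x) (f x), ∃ δ : Path x x,
      Path.Homotopic (δ.map f.continuous) γ) :
    Function.Surjective (inducedPi1 f x (f x) rfl) := by
  intro g
  obtain ⟨γ, hγ⟩ := Quotient.exists_rep (FundamentalGroup.toPath (X := TopCat.of Y) g)
  obtain ⟨δ, hδ⟩ := key γ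
  refine ⟨FundamentalGroup.fromPath (X := TopCat.of X) ⟦δ⟧, ?_⟩
  show (FundamentalGroupoid.fundamentalGroupoidFunctor.map
    (X := TopCat.of X) (Y := TopCat.of Y) (TopCat.ofHom f)).map ⟦δ⟧ = g
  show (⟦δ.map f.continuous⟧ : Path.Homotopic.Quotient (f x) (f x)) =
    FundamentalGroup.toPath (X := TopCat.of Y) g
  rw [← hγ]
  exact Quotient.sound hδ

theorem quot_comp_assoc {Z : Type*} [TopologicalSpace Z] {w x y z : Z}
    (p : Path.Homotopic.Quotient w x) (q : Path.Homotopic.Quotient x y)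
    (r : Path.Homotopic.Quotient y z) :
    (p.trans q).trans r = p.trans (q.trans r) := by
  have h := @Category.assoc (FundamentalGroupoid Z) _ ⟨w⟩ ⟨x⟩ ⟨y⟩ ⟨z⟩ p q r
  simpa only [FundamentalGroupoid.comp_eq] using h

end Assembly

section Main

attribute [local instance] Path.Homotopic.setoid

open Metric

/-- Let `K` be a simplicial complex with finitely many faces in a
finite-dimensional real vector space, `L` a subcomplex, `X = |K|` and `Y = |L|`. If
`X \ Y` is dense in `X` and `Y` does not separate any connected open subset of `X`, then
for every basepoint `x₀ ∈ X \ Y` the inclusion `X \ Y ↪ X` is π₁-surjective. -/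
theorem stmt10 {E : Type} [NormedAddCommGroup E] [NormedSpace ℝ E] [FiniteDimensional ℝ E]
    (K L : Geometry.SimplicialComplex ℝ E) (hfin : K.faces.Finite)
    (hsub : L.faces ⊆ K.faces)
    (hdense : Dense {p : K.space | (p : E) ∉ L.space})
    (hsep : ∀ U : Set K.space, IsOpen U → IsConnected U →
      IsConnected (U \ {p : K.space | (p : E) ∈ L.space}))
    (x₀ : {p : K.space | (p : E) ∉ L.space}) :
    Function.Surjective
      (inducedPi1 ⟨Subtype.val, continuous_subtype_val⟩ x₀ (x₀ : K.space) rfl) := by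
  classical
  haveI : LocallyPathConnectedSpace ↥K.space := K_locPathConnected hfin
  have hLclosed : IsClosed L.space := space_isClosed (hfin.subset hsub)
  have hAopen : IsOpen {p : ↥K.space | (p : E) ∉ L.space} := by
    rw [show {p : ↥K.space | (p : E) ∉ L.space} = (Subtype.val ⁻¹' L.space)ᶜ from rfl]
    exact (hLclosed.preimage continuous_subtype_val).isOpen_compl
  apply surjective_inducedPi1_of_key
  intro γ
  change Path ((x₀ : ↥K.space)) ((x₀ : ↥K.space)) at γ
  -- star radii for the Lebesgue covering
  obtain ⟨ER, hER1, -, hER3⟩ :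
      ∃ ER : ↥K.space → ℝ, (∀ q, 0 < ER q) ∧ (∀ q, ER q ≤ 1) ∧
        ∀ q : ↥K.space, StarConvex ℝ (↑q : E) (Metric.ball ((↑q : E)) (ER q) ∩ K.space) := by
    choose ER h1 h2 h3 using fun q : ↥K.space => exists_star_radius hfin (q : E) 1 one_pos
    exact ⟨ER, h1, h2, h3⟩
  -- Lebesgue number
  obtain ⟨δL, hδL, hLeb⟩ :=
    lebesgue_number_lemma_of_metric (s := (Set.univ : Set I))
      (c := fun i : I => γ ⁻¹' (Metric.ball (γ i) (ER (γ i)))) isCompact_univ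
      (fun i => Metric.isOpen_ball.preimage γ.continuous)
      (fun i _ => Set.mem_iUnion.mpr ⟨i, by simp [Metric.mem_ball_self (hER1 (γ i))]⟩)
  obtain ⟨n0, hn0⟩ := exists_nat_one_div_lt hδL
  set n : ℕ := n0 + 1 with hndef
  have hn : 0 < n := n0.succ_pos
  have hinv : (1 : ℝ) / n < δL := by
    have : ((n0 : ℝ) + 1) = (n : ℝ) := by push_cast [hndef]; ring
    rwa [this] at hn0
  have hnR : (0 : ℝ) < n := by positivity
  -- the subdivision times
  set t : ℕ → I := fun k => ⟨min ((k : ℝ) / n) 1,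
    ⟨le_min (by positivity) zero_le_one, min_le_right _ _⟩⟩ with htdef
  have ht : ∀ k, k ≤ n → (t k : ℝ) = (k : ℝ) / n := by
    intro k hk
    exact min_eq_left ((div_le_one hnR).mpr (Nat.cast_le.mpr hk))
  have ht0 : t 0 = 0 := by
    apply Subtype.ext
    simp [htdef]
  have htn : (t n : ℝ) = 1 := by
    rw [ht n le_rfl]; field_simp
  have htn' : t n = 1 := Subtype.ext (by rw [htn]; rfl)
  -- Lebesgue centers for each piece
  have hl : ∀ k : ℕ, ∃ i : I,
      Metric.ball (t (min k (n - 1))) δL ⊆ γ ⁻¹' (Metric.ball (γ i) (ER (γ i))) :=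
    fun k => hLeb _ (Set.mem_univ _)
  choose cen hcen using hl
  set B : ℕ → Set ↥K.space := fun k => Metric.ball (γ (cen k)) (ER (γ (cen k))) with hBdef
  have hBopen : ∀ k, IsOpen (B k) := fun k => Metric.isOpen_ball
  have hBmem : ∀ k (s : I), dist s (t (min k (n - 1))) < δL → γ s ∈ B k :=
    fun k s hs => hcen k hs
  -- distances between subdivision points
  have hdist1 : ∀ j m : ℕ, j ≤ n → m ≤ n → j ≤ m + 1 → m ≤ j + 1 → dist (t j) (t m) < δL := by
    intro j m hj hm hjm hmj
    rw [Subtype.dist_eq, ht j hj, ht m hm, Real.dist_eq]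
    have habs : |(j : ℝ) - (m : ℝ)| ≤ 1 := by
      rw [abs_le]
      constructor
      · have := (Nat.cast_le (α := ℝ)).mpr hmj; push_cast at this ⊢; linarith
      · have := (Nat.cast_le (α := ℝ)).mpr hjm; push_cast at this ⊢; linarith
    have : |(j : ℝ) / n - (m : ℝ) / n| = |(j : ℝ) - (m : ℝ)| / n := by
      rw [← sub_div, abs_div, abs_of_pos hnR]
    rw [this]
    calc |(j : ℝ) - (m : ℝ)| / n ≤ 1 / n := by gcongr
      _ < δL := hinv
  have hnodeIdx : ∀ k, k ≤ n → γ (t k) ∈ B (min k (n - 1)) := by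
    intro k hk
    have hmm : min (min k (n - 1)) (n - 1) = min k (n - 1) := min_eq_left (min_le_right _ _)
    apply hBmem
    rw [hmm]
    exact hdist1 k (min k (n - 1)) hk (by omega) (by omega) (by omega)
  have hnodePred : ∀ k, k ≤ n → γ (t k) ∈ B (k - 1) := by
    intro k hk
    have hmm : min (k - 1) (n - 1) = k - 1 := min_eq_left (by omega)
    apply hBmem
    rw [hmm]
    exact hdist1 k (k - 1) hk (by omega) (by omega) (by omega)
  -- small star neighborhoods at the subdivision points
  have hT : ∀ k, k ≤ n → ∃ ρ, 0 < ρ ∧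
      StarConvex ℝ ((γ (t k) : E)) (Metric.ball ((γ (t k)) : E) ρ ∩ K.space) ∧
      Metric.ball (γ (t k)) ρ ⊆ B (k - 1) ∧ Metric.ball (γ (t k)) ρ ⊆ B (min k (n - 1)) := by
    intro k hk
    have hmem : γ (t k) ∈ B (k - 1) ∩ B (min k (n - 1)) := ⟨hnodePred k hk, hnodeIdx k hk⟩
    obtain ⟨r, hr, hrsub⟩ :=
      Metric.isOpen_iff.mp ((hBopen (k - 1)).inter (hBopen (min k (n - 1)))) _ hmem
    obtain ⟨ρ, hρ, hρle, hρstar⟩ := exists_star_radius hfin _ r hr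
    refine ⟨ρ, hρ, hρstar, ?_, ?_⟩
    · exact ((Metric.ball_subset_ball hρle).trans hrsub).trans Set.inter_subset_left
    · exact ((Metric.ball_subset_ball hρle).trans hrsub).trans Set.inter_subset_right
  choose! ρ hρpos hρstar hTB1 hTB2 using hT
  set T : ℕ → Set ↥K.space := fun k => Metric.ball (γ (t k)) (ρ k) with hTdef
  -- picking points of A in the T's
  have hApick : ∀ k, k ≤ n → ∃ z, z ∈ T k ∧ (z : E) ∉ L.space := by
    intro k hk
    obtain ⟨z, hz1, hz2⟩ := hdense.exists_mem_open Metric.isOpen_ball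
      ⟨γ (t k), Metric.mem_ball_self (hρpos k hk)⟩
    exact ⟨z, hz2, hz1⟩
  -- joining points of A within the star balls B k
  have hjoin : ∀ k (y y' : ↥K.space), y ∈ B k → y' ∈ B k →
      (y : E) ∉ L.space → (y' : E) ∉ L.space →
      ∃ ω : Path y y', ∀ s, ω s ∈ B k ∧ (ω s : E) ∉ L.space := by
    intro k y y' hyB hy'B hyA hy'A
    have hconn : IsConnected (B k) :=
      (starBall_pathConnected _ (hER1 (γ (cen k))) (hER3 (γ (cen k)))).isConnected
    have hsep' := hsep (B k) (hBopen k) hconn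
    have hset : B k \ {p : ↥K.space | (p : E) ∈ L.space}
        = B k ∩ {p : ↥K.space | (p : E) ∉ L.space} := rfl
    rw [hset] at hsep'
    have hopen : IsOpen (B k ∩ {p : ↥K.space | (p : E) ∉ L.space}) := (hBopen k).inter hAopen
    have hpc := hopen.isConnected_iff_isPathConnected.mp hsep'
    obtain ⟨ω, hω⟩ := hpc.joinedIn y ⟨hyB, hyA⟩ y' ⟨hy'B, hy'A⟩
    exact ⟨ω, fun s => ⟨(hω s).1, (hω s).2⟩⟩
  -- the subdivision pieces
  set ta : ∀ k : ℕ, Path ((x₀ : ↥K.space)) (γ (t k)) :=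
    fun k => pseg γ 0 (t k) γ.extend_zero (γ.extend_extends' (t k)) with htadef
  set sg : ∀ k : ℕ, Path (γ (t k)) (γ (t (k + 1))) :=
    fun k => pseg γ (t k) (t (k + 1)) (γ.extend_extends' (t k)) (γ.extend_extends' (t (k + 1)))
      with hsgdef
  have htasg : ∀ k, ((ta k).trans (sg k)).Homotopic (ta (k + 1)) := fun k =>
    pseg_trans_pseg γ 0 (t k) (t (k + 1)) γ.extend_zero
      (γ.extend_extends' (t k)) (γ.extend_extends' (t (k + 1)))
  -- the pieces live in the star balls
  have hseg : ∀ k, k < n → ∀ s : I, sg k s ∈ B k := by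
    intro k hk s
    have hk1 : k + 1 ≤ n := hk
    have c1 : (t k : ℝ) = (k : ℝ) / n := ht k (le_of_lt hk)
    have c2 : (t (k + 1) : ℝ) = ((k : ℝ) + 1) / n := by
      rw [ht (k + 1) hk1]; push_cast; ring
    have hdiff : (t (k + 1) : ℝ) - (t k : ℝ) = 1 / n := by
      rw [c1, c2]; ring
    set u : ℝ := (t k : ℝ) + (s : ℝ) * ((t (k + 1) : ℝ) - (t k : ℝ)) with hu
    have hs0 : (0 : ℝ) ≤ s := s.2.1
    have hs1 : (s : ℝ) ≤ 1 := s.2.2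
    have hu0 : 0 ≤ u := by
      rw [hu, hdiff, c1]
      positivity
    have hu1 : u ≤ 1 := by
      rw [hu, hdiff, c1]
      have h1n : (s : ℝ) * (1 / n) ≤ 1 / n := by
        apply mul_le_of_le_one_left (by positivity) hs1
      have : ((k : ℝ) + 1) / n ≤ 1 := by
        rw [div_le_one hnR]
        have := (Nat.cast_le (α := ℝ)).mpr hk1
        push_cast at this ⊢; linarith
      calc (k : ℝ) / n + (s : ℝ) * (1 / n) ≤ (k : ℝ) / n + 1 / n := by linarith
        _ = ((k : ℝ) + 1) / n := by ring
        _ ≤ 1 := this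
    have hval : sg k s = γ ⟨u, hu0, hu1⟩ := by
      rw [hsgdef]
      show γ.extend u = _
      exact Path.extend_apply γ ⟨hu0, hu1⟩
    rw [hval]
    apply hBmem
    have hmm : min k (n - 1) = k := min_eq_left (by omega)
    rw [hmm, Subtype.dist_eq, Real.dist_eq]
    show |u - (t k : ℝ)| < δL
    have : u - (t k : ℝ) = (s : ℝ) * (1 / n) := by rw [hu, hdiff]; ring
    rw [this, abs_of_nonneg (by positivity)]
    calc (s : ℝ) * (1 / n) ≤ 1 / n := mul_le_of_le_one_left (by positivity) hs1
      _ < δL := hinv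
  -- the main induction: we can follow the loop up to node `k` through the complement of `L`
  have main : ∀ k, k ≤ n → ∀ (y' : {p : ↥K.space | (p : E) ∉ L.space}),
      (y' : ↥K.space) ∈ T k → ∀ (η : Path (γ (t k)) (y' : ↥K.space)), (∀ s, η s ∈ T k) →
      ∃ δ : Path x₀ y',
        (⟦δ.map continuous_subtype_val⟧ : Path.Homotopic.Quotient ((x₀ : ↥K.space)) (y' : ↥K.space)) =
          Path.Homotopic.Quotient.trans ⟦ta k⟧ ⟦η⟧ := by
    intro k
    induction k with
    | zero =>
      intro _ y' hy'T η hη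
      have ha0 : γ (t 0) = ((x₀ : ↥K.space)) := by rw [ht0]; exact γ.source
      have hmin0 : min 0 (n - 1) = 0 := min_eq_left (Nat.zero_le _)
      have haB : ((x₀ : ↥K.space)) ∈ B 0 := by
        rw [← ha0]
        have := hnodeIdx 0 (Nat.zero_le n)
        rwa [hmin0] at this
      have hTB : T 0 ⊆ B 0 := by
        have := hTB2 0 (Nat.zero_le n)
        rwa [hmin0] at this
      have hy'B : (y' : ↥K.space) ∈ B 0 := hTB hy'T
      obtain ⟨ω, hω⟩ := hjoin 0 ((x₀ : ↥K.space)) y' haB hy'B x₀.2 y'.2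
      let δ : Path x₀ y' := ⟨⟨fun s => ⟨ω s, (hω s).2⟩, by fun_prop⟩,
        Subtype.ext (by simp), Subtype.ext (by simp)⟩
      refine ⟨δ, ?_⟩
      have hδmap : δ.map continuous_subtype_val = ω := by ext s; rfl
      have hhom : ω.Homotopic ((ta 0).trans η) := by
        apply starBall_paths_homotopic (γ (cen 0)) (hER1 _) (hER3 _)
        · exact fun s => (hω s).1
        · refine trans_mem_of_mem (fun s => ?_) (fun s => hTB (hη s))
          have hta0 : ta 0 s = ((x₀ : ↥K.space)) := by
            rw [htadef]
            show γ.extend (0 + (s : ℝ) * ((t 0 : ℝ) - 0)) = ((x₀ : ↥K.space))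
            rw [show ((t 0 : ℝ)) = 0 by rw [ht0]; rfl]
            simpa using γ.extend_zero
          rw [hta0]; exact haB
      exact (congrArg (fun p => (⟦p⟧ : Path.Homotopic.Quotient _ _)) hδmap).trans
        ((Quotient.sound hhom).trans (Path.Homotopic.Quotient.mk_trans _ _))
    | succ k ih =>
      intro hk1 y' hy'T η' hη'
      have hk : k < n := hk1
      have hkle : k ≤ n := le_of_lt hk
      have hmink : min k (n - 1) = k := min_eq_left (by omega)
      obtain ⟨z, hzT, hzA⟩ := hApick k hkle
      obtain ⟨η, hη⟩ := (starBall_pathConnected (γ (t k)) (hρpos k hkle)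
        (hρstar k hkle)).joinedIn (γ (t k)) (Metric.mem_ball_self (hρpos k hkle)) z hzT
      obtain ⟨δk, hδk⟩ := ih hkle ⟨z, hzA⟩ hzT η hη
      have hy'B : (y' : ↥K.space) ∈ B k := hTB1 (k + 1) hk1 hy'T
      have hzB : z ∈ B k := by
        have := hTB2 k hkle hzT
        rwa [hmink] at this
      obtain ⟨ω, hω⟩ := hjoin k z y' hzB hy'B hzA y'.2
      let ωA : Path (⟨z, hzA⟩ : {p : ↥K.space | (p : E) ∉ L.space}) y' :=
        ⟨⟨fun s => ⟨ω s, (hω s).2⟩, by fun_prop⟩,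
          Subtype.ext (by simp), Subtype.ext (by simp)⟩
      refine ⟨δk.trans ωA, ?_⟩
      have hδmap : (δk.trans ωA).map continuous_subtype_val
          = (δk.map continuous_subtype_val).trans ω := by
        ext s
        apply congrArg Subtype.val
        show (((δk.trans ωA) s : {p : ↥K.space | (p : E) ∉ L.space}) : ↥K.space)
          = ((δk.map continuous_subtype_val).trans ω) s
        rw [Path.trans_apply, Path.trans_apply]
        split_ifs <;> rfl
      have hmid : Path.Homotopic.Quotient.trans (⟦η⟧ : Path.Homotopic.Quotient (γ (t k)) z) ⟦ω⟧
          = Path.Homotopic.Quotient.trans ⟦sg k⟧ ⟦η'⟧ := by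
        have hhom2 : (η.trans ω).Homotopic ((sg k).trans η') := by
          apply starBall_paths_homotopic (γ (cen k)) (hER1 _) (hER3 _)
          · refine trans_mem_of_mem (fun s => ?_) (fun s => (hω s).1)
            have := hTB2 k hkle (hη s)
            rwa [hmink] at this
          · exact trans_mem_of_mem (fun s => hseg k hk s) (fun s => hTB1 (k + 1) hk1 (hη' s))
        exact (Path.Homotopic.Quotient.mk_trans _ _).symm.trans
          ((Quotient.sound hhom2).trans (Path.Homotopic.Quotient.mk_trans _ _))
      have hcomb : Path.Homotopic.Quotient.trans
          (⟦ta k⟧ : Path.Homotopic.Quotient ((x₀ : ↥K.space)) (γ (t k))) ⟦sg k⟧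
          = ⟦ta (k + 1)⟧ :=
        (Path.Homotopic.Quotient.mk_trans _ _).symm.trans (Quotient.sound (htasg k))
      exact (congrArg (fun p => (⟦p⟧ : Path.Homotopic.Quotient _ _)) hδmap).trans
        ((Path.Homotopic.Quotient.mk_trans _ _).trans
          ((congrArg (fun q => Path.Homotopic.Quotient.trans q ⟦ω⟧) hδk).trans
            ((quot_comp_assoc _ _ _).trans
              ((congrArg (fun q => Path.Homotopic.Quotient.trans ⟦ta k⟧ q) hmid).trans
                ((quot_comp_assoc _ _ _).symm.trans
                  (congrArg (fun q => Path.Homotopic.Quotient.trans q ⟦η'⟧) hcomb))))))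
  -- conclude
  have hna : γ (t n) = ((x₀ : ↥K.space)) := by rw [htn']; exact γ.target
  have haT : ((x₀ : ↥K.space)) ∈ T n := by
    rw [← hna]
    exact Metric.mem_ball_self (hρpos n le_rfl)
  obtain ⟨δ, hδ⟩ := main n le_rfl x₀ haT ((Path.refl ((x₀ : ↥K.space))).cast hna rfl)
    (fun s => by
      have h1 : ((Path.refl ((x₀ : ↥K.space))).cast hna rfl) s = ((x₀ : ↥K.space)) := congrFun (Path.cast_coe _ _ _) s
      rw [h1]; exact haT)
  refine ⟨δ, Quotient.exact (hδ.trans ((Path.Homotopic.Quotient.mk_trans _ _).symm.trans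
    (Quotient.sound ?_)))⟩
  refine homotopic_of_extend_comp γ
    (fun s => if (s : ℝ) ≤ 1/2 then 0 + (2 * (s : ℝ)) * ((t n : ℝ) - 0) else 1)
    (fun s => (s : ℝ)) ?_ (by fun_prop) (by norm_num) (by norm_num) _ _ ?_
    (fun s => (γ.extend_extends' s).symm)
  · apply Continuous.if_le (by fun_prop) (by fun_prop) (by fun_prop) continuous_const
    intro s hs
    rw [hs]; norm_num [htn]
  · intro s
    rw [Path.trans_apply]
    split_ifs with h
    · rw [htadef]
      norm_num [pseg]
    · rw [show ∀ z, ((Path.refl ((x₀ : ↥K.space))).cast hna rfl) z = ((x₀ : ↥K.space))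
        from fun z => congrFun (Path.cast_coe _ _ _) z]
      exact γ.extend_one.symm


end Main

end AuxAll
end

section
/- Let G be a compact, connected, simply connected Lie group, k ≥ 1, and T a maximal torus of G. Then the continuous inclusion map T^k → Hom(ℤ^k,G), (t₁,…,t_k) ↦ (t₁,…,t_k), induces the trivial homomorphism π₁(T^k,(1,…,1)) → π₁(Hom(ℤ^k,G), 𝟙); that is, every loop in T^k based at (1,…,1) becomes nullhomotopic in Hom(ℤ^k,G). -/
open CategoryTheory
open scoped Manifold

/-- The space `Hom(ℤᵏ, G)` of commuting `k`-tuples in `G`, topologized as a subspace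
of `Gᵏ`. -/
def commTuples (G : Type) [Group G] (k : ℕ) : Set (Fin k → G) :=
  {x | ∀ i j, x i * x j = x j * x i}

/-- The trivial tuple `𝟙 = (1, …, 1)`. -/
def trivTuple (G : Type) [Group G] (k : ℕ) : commTuples G k :=
  ⟨1, fun _ _ => rfl⟩

/-- A maximal torus of `G`: a compact, connected, commutative subgroup of `G` which is
maximal with respect to inclusion among such subgroups. -/
structure IsMaximalTorus (G : Type) [Group G] [TopologicalSpace G] (T : Subgroup G) : Prop where
  isCompact : IsCompact (T : Set G)
  isConnected : IsConnected (T : Set G)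
  comm : ∀ x ∈ T, ∀ y ∈ T, x * y = y * x
  maximal : ∀ S : Subgroup G, IsCompact (S : Set G) → IsConnected (S : Set G) →
      (∀ x ∈ S, ∀ y ∈ S, x * y = y * x) → T ≤ S → S = T

section Aux

variable {G : Type} [TopologicalSpace G] [Group G] [IsTopologicalGroup G] [SimplyConnectedSpace G]
  {k : ℕ}

/-- The single-coordinate inclusion `G → commTuples G k` placing `g` at position `i₀`
and `1` elsewhere. -/
def singleTuple (G : Type) [Group G] (k : ℕ) (i₀ : Fin k) (g : G) : commTuples G k :=
  ⟨fun i => if i = i₀ then g else 1, by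
    intro a b
    dsimp only
    split_ifs <;> simp⟩

theorem continuous_singleTuple (i₀ : Fin k) : Continuous (singleTuple G k i₀) := by
  apply Continuous.subtype_mk
  apply continuous_pi
  intro i
  show Continuous fun g : G => if i = i₀ then g else 1
  by_cases h : i = i₀
  · simpa [h] using continuous_id'
  · simp only [if_neg h]
    exact continuous_const

theorem singleTuple_one (i₀ : Fin k) : singleTuple G k i₀ 1 = trivTuple G k := by
  apply Subtype.ext
  funext i
  simp [singleTuple, trivTuple]

theorem auxlem (T : Subgroup G) (hc : ∀ x ∈ T, ∀ y ∈ T, x * y = y * x) :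
    ∀ (n m : ℕ), m + n = k → ∀ p : Path (1 : Fin k → T) 1,
      (∀ j : Fin k, (j : ℕ) < m → ∀ t, p t j = 1) →
      (p.map (f := fun t : Fin k → T =>
          (⟨fun i => (t i : G), fun i j => hc _ (t i).2 _ (t j).2⟩ : commTuples G k))
        (Continuous.subtype_mk
          (continuous_pi fun i => continuous_subtype_val.comp (continuous_apply i)) _)).Homotopic
      (Path.refl (trivTuple G k)) := by
  intro n
  induction n with
  | zero =>
    intro m hm p hp
    have he : (p.map (f := fun t : Fin k → T =>
          (⟨fun i => (t i : G), fun i j => hc _ (t i).2 _ (t j).2⟩ : commTuples G k))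
        (Continuous.subtype_mk
          (continuous_pi fun i => continuous_subtype_val.comp (continuous_apply i)) _))
        = Path.refl (trivTuple G k) := by
      ext t
      · show ((p t _ : T) : G) = _
        rw [hp _ (by omega) t]
        rfl
    rw [he]
    exact Path.Homotopic.refl _
  | succ n ih =>
    intro m hm p hp
    have hmk : m < k := by omega
    set jm : Fin k := ⟨m, hmk⟩ with hjm
    set F : (Fin k → T) → commTuples G k := fun t : Fin k → T =>
      (⟨fun i => (t i : G), fun i j => hc _ (t i).2 _ (t j).2⟩ : commTuples G k) with hF
    set hFc : Continuous F := Continuous.subtype_mk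
      (continuous_pi fun i => continuous_subtype_val.comp (continuous_apply i)) _
    set pc : ∀ _ : Fin k, Path (1 : T) 1 := fun j => p.map (continuous_apply j) with hpc
    set sing : ∀ _ : Fin k, Path (1 : T) 1 :=
      fun j => if j = jm then pc jm else Path.refl 1 with hsing
    set qc : ∀ _ : Fin k, Path (1 : T) 1 :=
      fun j => if j = jm then Path.refl 1 else pc j with hqc
    -- coordinatewise homotopies
    have hcoord : ∀ j, (pc j).Homotopic ((sing j).trans (qc j)) := by
      intro j
      by_cases h : j = jm
      · subst h
        simp only [hsing, hqc, if_pos rfl]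
        exact ⟨(Path.Homotopy.transRefl _).symm⟩
      · simp only [hsing, hqc, if_neg h]
        exact ⟨(Path.Homotopy.reflTrans _).symm⟩
    have hpeq : p = Path.pi pc := by
      ext t j
      rfl
    have htr : (Path.pi sing).trans (Path.pi qc) = Path.pi fun j => (sing j).trans (qc j) :=
      Path.trans_pi_eq_pi_trans _ _
    have h1 : p.Homotopic ((Path.pi sing).trans (Path.pi qc)) := by
      rw [hpeq, htr]
      exact ⟨Path.Homotopic.piHomotopy _ _ fun j => (hcoord j).some⟩
    -- map everything into commTuples
    have h2 : (p.map hFc).Homotopic (((Path.pi sing).trans (Path.pi qc)).map hFc) :=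
      Path.Homotopic.map h1 ⟨F, hFc⟩
    -- the tail is nullhomotopic by induction
    have htail : ((Path.pi qc).map hFc).Homotopic (Path.refl (trivTuple G k)) := by
      refine ih (m + 1) (by omega) (Path.pi qc) ?_
      intro j hj t
      show qc j t = 1
      by_cases h : j = jm
      · simp [hqc, h]
      · have hjm' : (j : ℕ) ≠ m := fun hh => h (Fin.ext hh)
        have : (j : ℕ) < m := by omega
        simp only [hqc, if_neg h]
        exact hp j this t
    -- the head is nullhomotopic since G is simply connected
    have hhead : ((Path.pi sing).map hFc).Homotopic (Path.refl (trivTuple G k)) := by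
      have hkey : ∀ t : unitInterval, singleTuple G k jm ((p t jm : T) : G) = F (Path.pi sing t) := by
        intro t
        apply Subtype.ext
        funext i
        show (if i = jm then ((p t jm : T) : G) else 1) = ((sing i t : T) : G)
        by_cases h : i = jm
        · simp [h, hsing, hpc]
        · simp [h, hsing]
      have hnull : ((pc jm).map continuous_subtype_val : Path (1 : G) 1).Homotopic
          (Path.refl 1) := SimplyConnectedSpace.paths_homotopic _ _
      have H := hnull.some
      exact ⟨{ toFun := fun x => singleTuple G k jm (H x)
               continuous_toFun := (continuous_singleTuple jm).comp H.continuous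
               map_zero_left := fun t => by
                 have h0 : H (0, t) = ((p t jm : T) : G) := H.apply_zero t
                 show singleTuple G k jm (H (0, t)) = _
                 rw [h0]
                 exact hkey t
               map_one_left := fun t => by
                 have h1 : H (1, t) = 1 := H.apply_one t
                 show singleTuple G k jm (H (1, t)) = _
                 rw [h1]
                 exact singleTuple_one jm
               prop' := fun s x hx => by
                 have hp' : H (s, x) = ((p x jm : T) : G) := H.prop' s x hx
                 show singleTuple G k jm (H (s, x)) = _
                 rw [hp']
                 exact hkey x }⟩
    have h5 : (((Path.pi sing).trans (Path.pi qc)).map hFc).Homotopic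
        (Path.refl (trivTuple G k)) := by
      rw [Path.map_trans _ _ hFc]
      exact (Path.Homotopic.hcomp hhead htail).trans ⟨Path.Homotopy.transRefl _⟩
    exact h2.trans h5

end Aux

/-- For a compact, connected, simply connected Lie group `G`, `k ≥ 1`
and a maximal torus `T` of `G`, every loop in `Tᵏ` based at `(1,…,1)` becomes
nullhomotopic in `Hom(ℤᵏ,G)` under the inclusion `Tᵏ → Hom(ℤᵏ,G)`. -/
theorem stmt13 {E : Type} [NormedAddCommGroup E] [NormedSpace ℝ E] [FiniteDimensional ℝ E]
    {G : Type} [TopologicalSpace G] [ChartedSpace E G] [Group G] [IsTopologicalGroup G]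
    [LieGroup 𝓘(ℝ, E) (⊤ : ℕ∞) G] [CompactSpace G] [ConnectedSpace G] [SimplyConnectedSpace G] (k : ℕ) (hk : 1 ≤ k)
    (T : Subgroup G) (hT : IsMaximalTorus G T) (γ : Path (1 : Fin k → T) 1) :
    (γ.map (f := fun t : Fin k → T =>
        (⟨fun i => (t i : G), fun i j => hT.comm _ (t i).2 _ (t j).2⟩ : commTuples G k))
      (Continuous.subtype_mk
        (continuous_pi fun i => continuous_subtype_val.comp (continuous_apply i)) _)).Homotopic
    (Path.refl (trivTuple G k)) := by
  exact auxlem T hT.comm k 0 (Nat.zero_add k) γ fun j h => absurd h (Nat.not_lt_zero _)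
end

section
/- Let G be a compact Lie group with identity component G₀, and let k ≥ 1. Then the inclusion Hom(ℤ^k,G₀) ↪ Hom(ℤ^k,G) induces an isomorphism of fundamental groups π₁(Hom(ℤ^k,G₀), 𝟙) → π₁(Hom(ℤ^k,G), 𝟙). -/
open CategoryTheory Topology
open scoped Manifold

section Aux

attribute [local instance] Path.Homotopic.setoid

lemma lift_of_clopen {X Y Z : Type} [TopologicalSpace X] [TopologicalSpace Y]
    [TopologicalSpace Z] [PreconnectedSpace Z]
    (f : C(X, Y)) (hemb : IsEmbedding f) (hclopen : IsClopen (Set.range f))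
    (g : C(Z, Y)) (z₀ : Z) (hz₀ : g z₀ ∈ Set.range f) :
    ∃ h : C(Z, X), ∀ z, f (h z) = g z := by
  have hall : ∀ z : Z, g z ∈ Set.range f := by
    have hcl : IsClopen (g ⁻¹' Set.range f) := hclopen.preimage g.continuous
    have huniv := hcl.eq_univ ⟨z₀, hz₀⟩
    intro z
    have : z ∈ g ⁻¹' Set.range f := huniv ▸ Set.mem_univ z
    exact this
  choose h hh using hall
  refine ⟨⟨h, ?_⟩, hh⟩
  rw [hemb.continuous_iff]
  have : (f ∘ h) = g := funext hh
  rw [this]; exact g.continuous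

theorem pi1_bij_of_clopen {X Y : Type} [TopologicalSpace X] [TopologicalSpace Y]
    (f : C(X, Y)) (hemb : IsEmbedding f) (hclopen : IsClopen (Set.range f)) (x : X) :
    Function.Bijective (inducedPi1 f x (f x) rfl) := by
  have hmap : ∀ a : FundamentalGroup X x, (inducedPi1 f x (f x) rfl a)
      = (FundamentalGroupoid.fundamentalGroupoidFunctor.map
        (X := TopCat.of X) (Y := TopCat.of Y) (TopCat.ofHom f)).map a := fun _ => rfl
  constructor
  · -- injective
    intro a b hab
    have h1 : (inducedPi1 f x (f x) rfl a) = (inducedPi1 f x (f x) rfl b) := by rw [hab]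
    rw [hmap a, hmap b] at h1
    obtain ⟨p, hp⟩ := Quotient.exists_rep (a : Path.Homotopic.Quotient x x)
    obtain ⟨q, hq⟩ := Quotient.exists_rep (b : Path.Homotopic.Quotient x x)
    change (a : Path.Homotopic.Quotient x x) = b
    rw [← hp, ← hq]
    change Path.Homotopic.Quotient.map (a : Path.Homotopic.Quotient x x) f =
      Path.Homotopic.Quotient.map (b : Path.Homotopic.Quotient x x) f at h1
    rw [← hp, ← hq] at h1
    -- h1 : ⟦p.map f.continuous⟧ = ⟦q.map f.continuous⟧
    have h2 : Path.Homotopic (p.map f.continuous) (q.map f.continuous) := Quotient.exact h1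
    obtain ⟨H⟩ := h2
    -- lift homotopy
    obtain ⟨K, hK⟩ := lift_of_clopen f hemb hclopen H.toContinuousMap (0, 0)
      ⟨x, by simpa using (H.apply_zero 0).symm⟩
    have HK : p.Homotopy q := by
      refine ContinuousMap.HomotopyWith.mk (ContinuousMap.Homotopy.mk K ?_ ?_) ?_
      · intro t
        apply hemb.injective
        exact (hK _).trans (by simp)
      · intro t
        apply hemb.injective
        exact (hK _).trans (by simp)
      · intro t s hs
        apply hemb.injective
        exact (hK _).trans (by simpa using H.eq_fst t hs)
    exact Quotient.sound ⟨HK⟩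
  · -- surjective
    intro b
    obtain ⟨p, hp⟩ := Quotient.exists_rep (b : Path.Homotopic.Quotient (f x) (f x))
    obtain ⟨h, hh⟩ := lift_of_clopen f hemb hclopen p.toContinuousMap 0
      ⟨x, by simp⟩
    have h0 : h 0 = x := hemb.injective (by simpa using hh 0)
    have h1 : h 1 = x := hemb.injective (by simpa using hh 1)
    set γ : Path x x := ⟨h, h0, h1⟩ with hγ
    have hγp : γ.map f.continuous = p := by
      ext t
      exact hh t
    refine ⟨(⟦γ⟧ : Path.Homotopic.Quotient x x), ?_⟩
    show (⟦γ.map f.continuous⟧ : Path.Homotopic.Quotient (f x) (f x)) = b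
    rw [hγp]; exact hp

end Aux

/-- For a compact Lie group `G` with identity component `G₀` and
`k ≥ 1`, the inclusion `Hom(ℤᵏ,G₀) ↪ Hom(ℤᵏ,G)` induces an isomorphism on `π₁` at the
trivial tuple. -/
theorem stmt14 {E : Type} [NormedAddCommGroup E] [NormedSpace ℝ E] [FiniteDimensional ℝ E]
    {G : Type} [TopologicalSpace G] [ChartedSpace E G] [Group G] [IsTopologicalGroup G]
    [LieGroup 𝓘(ℝ, E) (⊤ : ℕ∞) G] [CompactSpace G] (k : ℕ) (hk : 1 ≤ k) :
    Function.Bijective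
      (inducedPi1
        ((⟨fun x => ⟨x.1, x.2.1⟩, continuous_subtype_val.subtype_mk _⟩ :
          C({x : Fin k → G | (∀ i j, x i * x j = x j * x i) ∧
              ∀ i, x i ∈ connectedComponent (1 : G)}, commTuples G k)))
        ⟨(1 : Fin k → G), fun _ _ => rfl, fun _ => mem_connectedComponent⟩
        (trivTuple G k) rfl) := by
  haveI := ChartedSpace.locallyConnectedSpace E G
  set X := {x : Fin k → G | (∀ i j, x i * x j = x j * x i) ∧
      ∀ i, x i ∈ connectedComponent (1 : G)}
  set f : C(X, commTuples G k) :=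
    ⟨fun x => ⟨x.1, x.2.1⟩, continuous_subtype_val.subtype_mk _⟩ with hf
  have hemb : IsEmbedding f := by
    apply IsEmbedding.of_comp f.continuous continuous_subtype_val
      (g := (Subtype.val : commTuples G k → (Fin k → G)))
    exact IsEmbedding.subtypeVal
  have hcc : IsClopen (connectedComponent (1 : G)) :=
    ⟨isClosed_connectedComponent, isOpen_connectedComponent⟩
  have hclopen : IsClopen (Set.range f) := by
    have hrange : Set.range f =
        (Subtype.val : commTuples G k → (Fin k → G)) ⁻¹'
          (⋂ i : Fin k, (fun v : Fin k → G => v i) ⁻¹' connectedComponent (1 : G)) := by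
      ext y
      simp only [Set.mem_range, Set.mem_preimage, Set.mem_iInter]
      constructor
      · rintro ⟨x, rfl⟩ i
        exact x.2.2 i
      · intro hy
        exact ⟨⟨y.1, y.2, hy⟩, Subtype.ext rfl⟩
    rw [hrange]
    apply IsClopen.preimage _ continuous_subtype_val
    constructor
    · exact isClosed_iInter fun i => hcc.1.preimage (continuous_apply i)
    · exact isOpen_iInter_of_finite fun i => hcc.2.preimage (continuous_apply i)
  exact pi1_bij_of_clopen f hemb hclopen
    ⟨(1 : Fin k → G), fun _ _ => rfl, fun _ => mem_connectedComponent⟩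
end

section
/- Let p : G̃ → G be a surjective continuous homomorphism of compact connected Lie groups whose kernel K is finite and contained in the center of G̃, and let k ≥ 1. Then for every commuting k-tuple ρ = (x₁,…,x_k) ∈ Hom(ℤ^k,G̃), one has p_*(ρ) = (p(x₁),…,p(x_k)) ∈ Hom(ℤ^k,G)_𝟙 if and only if ρ ∈ Hom(ℤ^k,G̃)_𝟙; that is, p_*⁻¹(Hom(ℤ^k,G)_𝟙) = Hom(ℤ^k,G̃)_𝟙. -/
open CategoryTheory
open scoped Manifold

/-- The map `p₁ : Hom(ℤᵏ, G') → Hom(ℤᵏ, G)` induced by a homomorphism `p : G' → G`. -/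
def pushMap {G' G : Type} [Group G'] [Group G] (p : G' →* G) (k : ℕ) :
    commTuples G' k → commTuples G k := fun x =>
  ⟨fun i => p ((x : Fin k → G') i), fun i j => by
    rw [← map_mul, ← map_mul, x.2 i j]⟩

lemma continuous_pushMap {G' G : Type} [Group G'] [Group G] [TopologicalSpace G']
    [TopologicalSpace G] (p : G' →* G) (hp : Continuous p) (k : ℕ) :
    Continuous (pushMap p k) :=
  Continuous.subtype_mk
    (continuous_pi fun i => hp.comp ((continuous_apply i).comp continuous_subtype_val)) _

lemma pushMap_trivTuple {G' G : Type} [Group G'] [Group G] (p : G' →* G) (k : ℕ) :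
    pushMap p k (trivTuple G' k) = trivTuple G k :=
  Subtype.ext (funext fun _ => map_one p)


section AuxStmt15

open Set Filter Topology unitInterval

private lemma joined_map {X Y : Type*} [TopologicalSpace X] [TopologicalSpace Y] {x y : X}
    (h : Joined x y) {f : X → Y} (hf : Continuous f) : Joined (f x) (f y) :=
  ⟨h.somePath.map hf⟩

private lemma min_abs_sub_le {t a b : ℝ} (hba : b ≤ a) : |min t a - min t b| ≤ a - b := by
  have h1 : min t b ≤ min t a := min_le_min le_rfl hba
  have h2 : min t a ≤ min t b + (a - b) := by
    rcases le_total t b with h | h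
    · rw [min_eq_left h]
      have := min_le_left t a
      linarith
    · rw [min_eq_right h]
      have := min_le_right t a
      linarith
  rw [abs_le]
  constructor <;> linarith

private lemma eq_one_of_ker_finite {G' : Type} [TopologicalSpace G'] [T1Space G'] [Group G']
    {K : Set G'} (hK : K.Finite) {F : ℝ → G'} (hF : Continuous F) (hmem : ∀ t, F t ∈ K)
    (h0 : F 0 = 1) : ∀ t, F t = 1 := by
  have hco : IsClosed (F ⁻¹' {1}) := isClosed_singleton.preimage hF
  have heq : F ⁻¹' {1} = F ⁻¹' ((K \ {1})ᶜ) := by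
    ext t
    simp only [mem_preimage, mem_singleton_iff, mem_compl_iff, mem_diff, not_and, not_not]
    exact ⟨fun h _ => h, fun h => h (hmem t)⟩
  have hop : IsOpen (F ⁻¹' {1}) := by
    rw [heq]
    exact (((hK.subset diff_subset).isClosed).isOpen_compl).preimage hF
  have huniv := IsClopen.eq_univ ⟨hco, hop⟩ ⟨0, h0⟩
  intro t
  have ht : t ∈ F ⁻¹' {1} := huniv ▸ mem_univ t
  exact ht

private lemma joined_one_of_nhds {G' : Type} [TopologicalSpace G'] [Group G'] [IsTopologicalGroup G']
    [PreconnectedSpace G'] {V : Set G'} (hV : V ∈ 𝓝 (1 : G')) (hVpc : IsPathConnected V)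
    (g : G') : Joined (1 : G') g := by
  have h1V : (1 : G') ∈ V := mem_of_mem_nhds hV
  have key : ∀ y : G', ∀ v ∈ V, Joined y (y * v) := by
    intro y v hv
    have hj : Joined (1 : G') v := (hVpc.joinedIn 1 h1V v hv).joined
    have := joined_map hj (continuous_mul_left y)
    simpa using this
  have hnhds : ∀ y : G', (fun v => y * v) '' V ∈ 𝓝 y := by
    intro y
    have hmap := (Homeomorph.mulLeft y).map_nhds_eq (1 : G')
    have himg : (fun v => y * v) '' V ∈ Filter.map (⇑(Homeomorph.mulLeft y)) (𝓝 (1 : G')) :=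
      Filter.image_mem_map hV
    rw [hmap] at himg
    simpa using himg
  have hPopen : IsOpen (pathComponent (1 : G')) := by
    rw [isOpen_iff_mem_nhds]
    intro y hy
    refine Filter.mem_of_superset (hnhds y) ?_
    rintro _ ⟨v, hv, rfl⟩
    exact mem_pathComponent_iff.mpr ((mem_pathComponent_iff.mp hy).trans (key y v hv))
  have hPclosed : IsClosed (pathComponent (1 : G')) := by
    rw [← isOpen_compl_iff, isOpen_iff_mem_nhds]
    intro y hy
    refine Filter.mem_of_superset (hnhds y) ?_
    rintro _ ⟨v, hv, rfl⟩ hmem2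
    exact hy (mem_pathComponent_iff.mpr
      ((mem_pathComponent_iff.mp hmem2).trans (key y v hv).symm))
  have huniv := IsClopen.eq_univ ⟨hPclosed, hPopen⟩ ⟨1, mem_pathComponent_self 1⟩
  exact mem_pathComponent_iff.mp (huniv ▸ mem_univ g)

private lemma exists_pc_nhds {E₁ G' : Type} [NormedAddCommGroup E₁] [NormedSpace ℝ E₁]
    [TopologicalSpace G'] [ChartedSpace E₁ G'] (x : G') :
    ∃ V ∈ 𝓝 x, IsPathConnected V := by
  set e := chartAt E₁ x with he
  have hx : x ∈ e.source := mem_chart_source E₁ x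
  obtain ⟨ε, hε, hball⟩ := Metric.isOpen_iff.mp e.open_target (e x) (e.map_source hx)
  refine ⟨e.symm '' Metric.ball (e x) ε, ?_, ?_⟩
  · exact (e.isOpen_image_symm_of_subset_target Metric.isOpen_ball hball).mem_nhds
      ⟨e x, Metric.mem_ball_self hε, e.left_inv hx⟩
  · exact ((convex_ball (e x) ε).isPathConnected ⟨e x, Metric.mem_ball_self hε⟩).image'
      (e.symm.continuousOn.mono (by rwa [e.symm_source]))

private lemma isOpenMap_of_surj {G' G : Type} [TopologicalSpace G'] [TopologicalSpace G]
    [Group G'] [Group G] [IsTopologicalGroup G'] [IsTopologicalGroup G] [CompactSpace G'] [T2Space G]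
    (p : G' →* G) (hp : Continuous p) (hsurj : Function.Surjective p) : IsOpenMap p := by
  intro A hA
  have hT : IsOpen {z : G' | p z ∈ p '' A} := by
    have heq : {z : G' | p z ∈ p '' A} = ⋃ κ : p.ker, (fun z => z * (κ : G')) '' A := by
      ext z
      simp only [mem_setOf_eq, mem_iUnion, mem_image]
      constructor
      · rintro ⟨a, ha, hpa⟩
        refine ⟨⟨a⁻¹ * z, ?_⟩, a, ha, ?_⟩
        · have : p (a⁻¹ * z) = 1 := by rw [map_mul, map_inv, hpa, inv_mul_cancel]
          exact this
        · simp [← mul_assoc]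
      · rintro ⟨κ, a, ha, rfl⟩
        refine ⟨a, ha, ?_⟩
        have hκ : p (κ : G') = 1 := κ.2
        rw [map_mul, hκ, mul_one]
    rw [heq]
    exact isOpen_iUnion fun κ => (Homeomorph.mulRight (κ : G')).isOpenMap A hA
  have hclosed : IsClosed (p '' {z : G' | p z ∈ p '' A}ᶜ) :=
    hp.isClosedMap _ hT.isClosed_compl
  have himg : p '' A = (p '' {z : G' | p z ∈ p '' A}ᶜ)ᶜ := by
    ext y
    constructor
    · rintro ⟨a, ha, rfl⟩
      rintro ⟨z, hz, hpz⟩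
      exact hz ⟨a, ha, hpz.symm⟩
    · intro hy
      obtain ⟨z, rfl⟩ := hsurj y
      by_contra hmem
      exact hy ⟨z, fun h => hmem h, rfl⟩
  rw [himg]
  exact hclosed.isOpen_compl

private lemma exists_section {G' G : Type} [TopologicalSpace G'] [TopologicalSpace G] [Group G']
    [Group G] [IsTopologicalGroup G'] [IsTopologicalGroup G] [CompactSpace G'] [T2Space G'] [T2Space G]
    (p : G' →* G) (hp : Continuous p) (hsurj : Function.Surjective p)
    (hfin : (p.ker : Set G').Finite) :
    ∃ (sec : G → G') (pW : Set G), IsOpen pW ∧ (1 : G) ∈ pW ∧ ContinuousOn sec pW ∧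
      sec 1 = 1 ∧ ∀ y ∈ pW, p (sec y) = y := by
  classical
  have hUopen : IsOpen ((p.ker : Set G') \ {1})ᶜ :=
    ((hfin.subset diff_subset).isClosed).isOpen_compl
  have h1U : (1 : G') ∈ ((p.ker : Set G') \ {1})ᶜ := by simp
  obtain ⟨V, hVnhds, hVdiv⟩ := exists_nhds_split_inv (hUopen.mem_nhds h1U)
  obtain ⟨C, hCnhds, hCclosed, hCV⟩ := exists_mem_nhds_isClosed_subset hVnhds
  have h1C : (1 : G') ∈ C := mem_of_mem_nhds hCnhds
  have hCcomp : IsCompact C := hCclosed.isCompact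
  have hinj : Set.InjOn p C := by
    intro a ha b hb hab
    have hdiv : a / b ∈ ((p.ker : Set G') \ {1})ᶜ := hVdiv a (hCV ha) b (hCV hb)
    have hker : a / b ∈ p.ker := by
      rw [MonoidHom.mem_ker, map_div, hab, div_self']
    have hone : a / b = 1 := by
      by_contra hne
      exact hdiv ⟨hker, by simpa using hne⟩
    exact div_eq_one.mp hone
  have hWopen : IsOpen (interior C) := isOpen_interior
  have h1W : (1 : G') ∈ interior C := mem_interior_iff_mem_nhds.mpr hCnhds
  have hpopen : IsOpenMap p := isOpenMap_of_surj p hp hsurj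
  haveI : CompactSpace C := isCompact_iff_compactSpace.mp hCcomp
  set φ : C ≃ (p '' C : Set G) := Equiv.ofBijective
      (fun c => ⟨p c, mem_image_of_mem p c.2⟩)
      ⟨fun a b hab => Subtype.ext (hinj a.2 b.2 (congrArg Subtype.val hab)),
        by rintro ⟨y, a, ha, rfl⟩; exact ⟨⟨a, ha⟩, rfl⟩⟩ with hφ
  have hφc : Continuous φ := Continuous.subtype_mk (hp.comp continuous_subtype_val) _
  set e : C ≃ₜ (p '' C : Set G) := hφc.homeoOfEquivCompactToT2 with he
  have hecoe : ∀ c : C, ((e c : G)) = p (c : G') := fun c => rfl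
  refine ⟨fun y => if h : y ∈ p '' C then ((e.symm ⟨y, h⟩ : C) : G') else 1, p '' interior C,
    hpopen _ hWopen, ⟨1, h1W, map_one p⟩, ?_, ?_, ?_⟩
  · have hsub : p '' interior C ⊆ p '' C := image_mono (f := p) interior_subset
    rw [continuousOn_iff_continuous_restrict]
    have hcont : Continuous fun z : (p '' interior C : Set G) =>
        ((e.symm ⟨z.1, hsub z.2⟩ : C) : G') :=
      continuous_subtype_val.comp (e.symm.continuous.comp
        (Continuous.subtype_mk continuous_subtype_val _))
    apply hcont.congr
    intro z
    simp only [Set.restrict_apply]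
    rw [dif_pos (hsub z.2)]
  · have h1pc : (1 : G) ∈ p '' C := ⟨1, h1C, map_one p⟩
    dsimp only
    rw [dif_pos h1pc]
    have h1e : e ⟨1, h1C⟩ = ⟨1, h1pc⟩ := Subtype.ext (map_one p)
    rw [← h1e, e.symm_apply_apply]
  · intro y hy
    have hyC : y ∈ p '' C := image_mono (f := p) interior_subset hy
    dsimp only
    rw [dif_pos hyC]
    have : p ((e.symm ⟨y, hyC⟩ : C) : G') = ((e (e.symm ⟨y, hyC⟩) : G)) :=
      (hecoe _).symm
    rw [this, e.apply_symm_apply]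

private lemma projIcc_lip (s t : ℝ) :
    |((projIcc (0:ℝ) 1 zero_le_one s : unitInterval) : ℝ) -
      ((projIcc (0:ℝ) 1 zero_le_one t : unitInterval) : ℝ)| ≤ |s - t| := by
  have hs : ((projIcc (0:ℝ) 1 zero_le_one s : unitInterval) : ℝ) = max 0 (min 1 s) := rfl
  have ht : ((projIcc (0:ℝ) 1 zero_le_one t : unitInterval) : ℝ) = max 0 (min 1 t) := rfl
  rw [hs, ht]
  have h1 := le_abs_self (s - t)
  have h2 := neg_abs_le (s - t)
  rw [abs_le]
  constructor <;>
    · simp only [max_def, min_def]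
      split_ifs <;> linarith

private lemma exists_subdiv {G : Type} [TopologicalSpace G] [Group G] [IsTopologicalGroup G]
    {pW : Set G} (hpW : IsOpen pW) (h1 : (1 : G) ∈ pW) {γ : unitInterval → G}
    (hγ : Continuous γ) :
    ∃ n : ℕ, 0 < n ∧ ∀ a b : ℝ, |a - b| ≤ 1 / (n : ℝ) →
      γ (projIcc 0 1 zero_le_one a) * (γ (projIcc 0 1 zero_le_one b))⁻¹ ∈ pW := by
  set D : unitInterval × unitInterval → G := fun q => γ q.1 * (γ q.2)⁻¹ with hD
  have hDc : Continuous D := (hγ.comp continuous_fst).mul ((hγ.comp continuous_snd).inv)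
  set S := (D ⁻¹' pW)ᶜ with hS
  have hSc : IsClosed S := (hpW.preimage hDc).isClosed_compl
  rcases S.eq_empty_or_nonempty with hSe | hSne
  · refine ⟨1, one_pos, fun a b _ => ?_⟩
    have hnot : (projIcc (0:ℝ) 1 zero_le_one a, projIcc (0:ℝ) 1 zero_le_one b) ∉ S :=
      hSe ▸ notMem_empty _
    simpa [hS, hD] using hnot
  · have hScomp : IsCompact S := hSc.isCompact
    have hfc : Continuous fun q : unitInterval × unitInterval => |((q.1 : ℝ)) - ((q.2 : ℝ))| :=
      ((continuous_subtype_val.comp continuous_fst).sub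
        (continuous_subtype_val.comp continuous_snd)).abs
    obtain ⟨q₀, hq₀, hmin⟩ := hScomp.exists_isMinOn hSne hfc.continuousOn
    have hεpos : 0 < |((q₀.1 : ℝ)) - ((q₀.2 : ℝ))| := by
      rcases (abs_nonneg ((q₀.1 : ℝ) - (q₀.2 : ℝ))).lt_or_eq with h | h
      · exact h
      · exfalso
        have hq : (q₀.1 : ℝ) = (q₀.2 : ℝ) := by
          have := abs_eq_zero.mp h.symm
          linarith
        have hqeq : q₀.1 = q₀.2 := Subtype.ext hq
        have : D q₀ ∈ pW := by
          simp only [hD, hqeq, mul_inv_cancel]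
          exact h1
        exact hq₀ this
    obtain ⟨n, hn⟩ := exists_nat_one_div_lt hεpos
    refine ⟨n + 1, Nat.succ_pos n, fun a b hab => ?_⟩
    by_contra hq
    have hmemS : (projIcc (0:ℝ) 1 zero_le_one a, projIcc (0:ℝ) 1 zero_le_one b) ∈ S := by
      simpa [hS, hD] using hq
    have hge := isMinOn_iff.mp hmin _ hmemS
    have hlip := projIcc_lip a b
    have hcast : ((n + 1 : ℕ) : ℝ) = (n : ℝ) + 1 := by push_cast; ring
    rw [hcast] at hab
    simp only at hge
    linarith

private noncomputable def liftAux {G' G : Type} [Group G'] [Group G] (sec : G → G') (g : ℝ → G)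
    (n : ℕ) (x₀ : G') : ℕ → ℝ → G'
  | 0 => fun _ => x₀
  | (m + 1) => fun t =>
      sec (g (min t (((m : ℝ) + 1) / (n : ℝ))) * (g (min t ((m : ℝ) / (n : ℝ))))⁻¹) *
        liftAux sec g n x₀ m t

private lemma min_div_bound {t : ℝ} {m n : ℕ} (hn : 0 < n) :
    |min t (((m : ℝ) + 1) / (n : ℝ)) - min t ((m : ℝ) / (n : ℝ))| ≤ 1 / (n : ℝ) := by
  have hnn : (0 : ℝ) < (n : ℝ) := Nat.cast_pos.mpr hn
  have hba : (m : ℝ) / n ≤ ((m : ℝ) + 1) / n :=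
    (div_le_div_iff_of_pos_right hnn).mpr (by linarith)
  have hb := min_abs_sub_le (t := t) hba
  have heq : ((m : ℝ) + 1) / (n : ℝ) - (m : ℝ) / (n : ℝ) = 1 / (n : ℝ) := by ring
  linarith

private lemma liftAux_continuous {G' G : Type} [Group G'] [Group G] [TopologicalSpace G']
    [TopologicalSpace G] [IsTopologicalGroup G'] [IsTopologicalGroup G] {sec : G → G'} {pW : Set G}
    (hsec : ContinuousOn sec pW) {g : ℝ → G} (hg : Continuous g) {n : ℕ} (hn : 0 < n)
    (hsmall : ∀ a b : ℝ, |a - b| ≤ 1 / (n : ℝ) → g a * (g b)⁻¹ ∈ pW) (x₀ : G') :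
    ∀ m, Continuous (liftAux sec g n x₀ m)
  | 0 => continuous_const
  | (m + 1) => by
      have hq : Continuous fun t : ℝ =>
          g (min t (((m : ℝ) + 1) / (n : ℝ))) * (g (min t ((m : ℝ) / (n : ℝ))))⁻¹ :=
        (hg.comp (continuous_id.min continuous_const)).mul
          (hg.comp (continuous_id.min continuous_const)).inv
      exact (hsec.comp_continuous hq fun t => hsmall _ _ (min_div_bound hn)).mul
        (liftAux_continuous hsec hg hn hsmall x₀ m)

private lemma liftAux_proj {G' G : Type} [Group G'] [Group G] (p : G' →* G) {sec : G → G'}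
    {pW : Set G} (hpsec : ∀ y ∈ pW, p (sec y) = y) {g : ℝ → G} {n : ℕ} (hn : 0 < n)
    (hsmall : ∀ a b : ℝ, |a - b| ≤ 1 / (n : ℝ) → g a * (g b)⁻¹ ∈ pW) {x₀ : G'}
    (hx₀ : p x₀ = g 0) (hneg : ∀ t ≤ (0 : ℝ), g t = g 0) :
    ∀ m (t : ℝ), p (liftAux sec g n x₀ m t) = g (min t ((m : ℝ) / (n : ℝ)))
  | 0, t => by
      simp only [liftAux, Nat.cast_zero, zero_div]
      rcases le_total t 0 with ht | ht
      · rw [min_eq_left ht, hneg t ht, hx₀]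
      · rw [min_eq_right ht, hx₀]
  | (m + 1), t => by
      have ih := liftAux_proj p hpsec hn hsmall hx₀ hneg m t
      have hmem := hsmall _ _ (min_div_bound (t := t) (m := m) hn)
      simp only [liftAux, map_mul]
      rw [hpsec _ hmem, ih]
      push_cast
      rw [inv_mul_cancel_right]

private lemma liftAux_zero {G' G : Type} [Group G'] [Group G] {sec : G → G'} (hsec1 : sec 1 = 1)
    {g : ℝ → G} {n : ℕ} (x₀ : G') : ∀ m, liftAux sec g n x₀ m 0 = x₀
  | 0 => rfl
  | (m + 1) => by
      have h1 : min (0 : ℝ) (((m : ℝ) + 1) / (n : ℝ)) = 0 := min_eq_left (by positivity)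
      have h2 : min (0 : ℝ) ((m : ℝ) / (n : ℝ)) = 0 := min_eq_left (by positivity)
      simp only [liftAux, h1, h2, mul_inv_cancel, hsec1, one_mul]
      exact liftAux_zero hsec1 x₀ m

private lemma central_mem {G' : Type} [Group G'] {k : ℕ} {v : Fin k → G'}
    (hv : ∀ i, v i ∈ Subgroup.center G') : v ∈ commTuples G' k := fun i j =>
  Subgroup.mem_center_iff.mp (hv j) (v i)

private lemma joined_triv_central {G' : Type} [Group G'] [TopologicalSpace G']
    [IsTopologicalGroup G'] {k : ℕ} (κ : Fin k → G') (hκ : ∀ i, κ i ∈ Subgroup.center G')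
    (hj : ∀ i, Joined (1 : G') (κ i)) (hmem : κ ∈ commTuples G' k) :
    Joined (trivTuple G' k) (⟨κ, hmem⟩ : commTuples G' k) := by
  have hc : ∀ m : ℕ, (fun i : Fin k => if (i : ℕ) < m then κ i else 1) ∈ commTuples G' k := by
    intro m
    apply central_mem
    intro i
    split_ifs
    · exact hκ i
    · exact Subgroup.one_mem _
  have main : ∀ m : ℕ, Joined (trivTuple G' k)
      (⟨fun i => if (i : ℕ) < m then κ i else 1, hc m⟩ : commTuples G' k) := by
    intro m
    induction m with
    | zero =>
        have heq0 : (⟨fun i => if (i : ℕ) < 0 then κ i else 1, hc 0⟩ : commTuples G' k)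
            = trivTuple G' k := by
          apply Subtype.ext
          funext i
          simp [trivTuple]
        rw [heq0]
    | succ m ih =>
        by_cases hm : m < k
        · refine ih.trans ?_
          set c : Path (1 : G') (κ ⟨m, hm⟩) := (hj ⟨m, hm⟩).somePath with hcdef
          have hmemt : ∀ t : unitInterval,
              (fun i : Fin k => if (i : ℕ) < m then κ i else if (i : ℕ) = m then c t else 1)
                ∈ commTuples G' k := by
            intro t i j
            dsimp only
            have hcase : ∀ i : Fin k,
                (if (i : ℕ) < m then κ i else if (i : ℕ) = m then c t else 1)
                  ∈ Subgroup.center G'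
                ∨ (if (i : ℕ) < m then κ i else if (i : ℕ) = m then c t else 1) = c t := by
              intro i'
              split_ifs
              · exact Or.inl (hκ i')
              · exact Or.inr rfl
              · exact Or.inl (Subgroup.one_mem _)
            rcases hcase i with hi | hi
            · exact (Subgroup.mem_center_iff.mp hi _).symm
            · rcases hcase j with hj' | hj'
              · exact Subgroup.mem_center_iff.mp hj' _
              · rw [hi, hj']
          refine ⟨⟨⟨fun t =>
            ⟨fun i => if (i : ℕ) < m then κ i else if (i : ℕ) = m then c t else 1, hmemt t⟩,
            ?_⟩, ?_, ?_⟩⟩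
          · refine Continuous.subtype_mk (continuous_pi fun i => ?_) _
            split_ifs
            · exact continuous_const
            · exact c.continuous
            · exact continuous_const
          · apply Subtype.ext
            funext i
            simp only [Path.source]
            split_ifs <;> rfl
          · apply Subtype.ext
            funext i
            simp only [Path.target]
            by_cases h1 : (i : ℕ) < m
            · have h1' : (i : ℕ) < m + 1 := Nat.lt_succ_of_lt h1
              simp [h1, h1']
            · by_cases h2 : (i : ℕ) = m
              · have hieq : i = ⟨m, hm⟩ := Fin.ext h2
                have h3 : (i : ℕ) < m + 1 := by omega
                simp [h1, h2, h3, hieq]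
              · have h3 : ¬ (i : ℕ) < m + 1 := by omega
                simp [h1, h2, h3]
        · have heqm : (⟨fun i => if (i : ℕ) < m + 1 then κ i else 1, hc (m + 1)⟩
              : commTuples G' k)
              = ⟨fun i => if (i : ℕ) < m then κ i else 1, hc m⟩ := by
            apply Subtype.ext
            funext i
            have h1 : (i : ℕ) < m := lt_of_lt_of_le i.isLt (le_of_not_gt hm)
            have h2 : (i : ℕ) < m + 1 := Nat.lt_succ_of_lt h1
            simp [h1, h2]
          rw [heqm]
          exact ih
  have hk := main k
  have heqk : (⟨fun i => if (i : ℕ) < k then κ i else 1, hc k⟩ : commTuples G' k)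
      = ⟨κ, hmem⟩ := by
    apply Subtype.ext
    funext i
    simp [i.isLt]
  rwa [heqk] at hk

end AuxStmt15

/-- For a surjective continuous homomorphism `p : G' → G` of compact
connected Lie groups with finite central kernel, `p₁⁻¹(Hom(ℤᵏ,G)_𝟙) = Hom(ℤᵏ,G')_𝟙`. -/
theorem stmt15 {E₁ : Type} [NormedAddCommGroup E₁] [NormedSpace ℝ E₁] [FiniteDimensional ℝ E₁]
    {G' : Type} [TopologicalSpace G'] [ChartedSpace E₁ G'] [Group G'] [IsTopologicalGroup G']
    [LieGroup 𝓘(ℝ, E₁) (⊤ : ℕ∞) G'] [CompactSpace G'] [ConnectedSpace G']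
    {E₂ : Type} [NormedAddCommGroup E₂] [NormedSpace ℝ E₂] [FiniteDimensional ℝ E₂]
    {G : Type} [TopologicalSpace G] [ChartedSpace E₂ G] [Group G] [IsTopologicalGroup G]
    [LieGroup 𝓘(ℝ, E₂) (⊤ : ℕ∞) G] [CompactSpace G] [ConnectedSpace G] (p : G' →* G) (hp : Continuous p)
    (hsurj : Function.Surjective p) (hfin : (p.ker : Set G').Finite)
    (hcent : p.ker ≤ Subgroup.center G') (k : ℕ) (hk : 1 ≤ k) (x : commTuples G' k) :
    pushMap p k x ∈ pathComponent (trivTuple G k) ↔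
      x ∈ pathComponent (trivTuple G' k) := by
  classical
  haveI hT1' : T1Space G' := ChartedSpace.t1Space E₁ G'
  haveI hT1 : T1Space G := ChartedSpace.t1Space E₂ G
  haveI hT2' : T2Space G' := IsTopologicalGroup.t2Space_iff_one_closed.mpr isClosed_singleton
  haveI hT2 : T2Space G := IsTopologicalGroup.t2Space_iff_one_closed.mpr isClosed_singleton
  constructor
  · intro h
    obtain ⟨Γ0⟩ := mem_pathComponent_iff.mp h
    set Γ : Path (pushMap p k x) (trivTuple G k) := Γ0.symm with hΓdef
    obtain ⟨sec, pW, hpWo, h1pW, hseccont, hsec1, hpsec⟩ := exists_section p hp hsurj hfin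
    set γ : Fin k → unitInterval → G :=
      fun i t => ((Γ t : commTuples G k) : Fin k → G) i with hγdef
    have hγc : ∀ i, Continuous (γ i) := fun i =>
      (continuous_apply i).comp (continuous_subtype_val.comp Γ.continuous)
    set g : Fin k → ℝ → G := fun i t => γ i (Set.projIcc 0 1 zero_le_one t) with hgdef
    have hgc : ∀ i, Continuous (g i) := fun i => (hγc i).comp continuous_projIcc
    have hproj0 : Set.projIcc (0:ℝ) 1 zero_le_one 0 = (0 : unitInterval) := by
      apply Subtype.ext
      simp [Set.projIcc]
    have hproj1 : Set.projIcc (0:ℝ) 1 zero_le_one 1 = (1 : unitInterval) := by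
      apply Subtype.ext
      simp [Set.projIcc]
    have hgneg : ∀ i, ∀ t ≤ (0:ℝ), g i t = g i 0 := by
      intro i t ht
      simp only [hgdef]
      congr 1
      rw [hproj0]
      apply Subtype.ext
      show max 0 (min 1 t) = (0 : ℝ)
      rw [min_eq_right (ht.trans zero_le_one), max_eq_left ht]
    have hx0 : ∀ i, p ((x : Fin k → G') i) = g i 0 := by
      intro i
      simp only [hgdef, hproj0, hγdef]
      have hΓ0 : Γ 0 = pushMap p k x := Γ.source
      rw [hΓ0]
      rfl
    choose n hn hsmall using fun i => exists_subdiv hpWo h1pW (hγc i)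
    set ℓ : Fin k → ℝ → G' :=
      fun i => liftAux sec (g i) (n i) ((x : Fin k → G') i) (n i) with hℓdef
    have hℓc : ∀ i, Continuous (ℓ i) :=
      fun i => liftAux_continuous hseccont (hgc i) (hn i) (hsmall i) _ (n i)
    have hℓ0 : ∀ i, ℓ i 0 = (x : Fin k → G') i :=
      fun i => liftAux_zero hsec1 _ (n i)
    have hproj : ∀ i (t : ℝ), p (ℓ i t) = g i (min t 1) := by
      intro i t
      have := liftAux_proj p hpsec (hn i) (hsmall i) (hx0 i) (hgneg i) (n i) t
      rwa [div_self (Nat.cast_ne_zero.mpr (hn i).ne' : ((n i : ℝ)) ≠ 0)] at this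
    have hcomm : ∀ (t : ℝ) (i j : Fin k), ℓ i t * ℓ j t = ℓ j t * ℓ i t := by
      intro t i j
      have hFc : Continuous (fun u : ℝ => ℓ i u * ℓ j u * (ℓ j u * ℓ i u)⁻¹) :=
        ((hℓc i).mul (hℓc j)).mul ((hℓc j).mul (hℓc i)).inv
      have hFm : ∀ u : ℝ, ℓ i u * ℓ j u * (ℓ j u * ℓ i u)⁻¹ ∈ (p.ker : Set G') := by
        intro u
        simp only [SetLike.mem_coe, MonoidHom.mem_ker, map_mul, map_inv, hproj]
        rw [mul_inv_eq_one]
        exact (Γ (Set.projIcc 0 1 zero_le_one (min u 1)) : commTuples G k).2 i j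
      have hF0 : ℓ i 0 * ℓ j 0 * (ℓ j 0 * ℓ i 0)⁻¹ = 1 := by
        rw [hℓ0 i, hℓ0 j, mul_inv_eq_one]
        exact x.2 i j
      have := eq_one_of_ker_finite hfin hFc hFm hF0 t
      exact mul_inv_eq_one.mp this
    have hκker : ∀ i, ℓ i 1 ∈ p.ker := by
      intro i
      rw [MonoidHom.mem_ker, hproj i 1, min_self]
      show γ i (Set.projIcc 0 1 zero_le_one 1) = 1
      rw [hproj1]
      show ((Γ 1 : commTuples G k) : Fin k → G) i = 1
      rw [Γ.target]
      rfl
    have hκmem : (fun i => ℓ i 1) ∈ commTuples G' k := fun i j => hcomm 1 i j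
    have hxκ : Joined x (⟨fun i => ℓ i 1, hκmem⟩ : commTuples G' k) := by
      refine ⟨⟨⟨fun t => ⟨fun i => ℓ i (t : ℝ), fun i j => hcomm _ i j⟩, ?_⟩, ?_, ?_⟩⟩
      · exact Continuous.subtype_mk
          (continuous_pi fun i => (hℓc i).comp continuous_subtype_val) _
      · apply Subtype.ext
        funext i
        show ℓ i ((0 : unitInterval) : ℝ) = (x : Fin k → G') i
        rw [show ((0 : unitInterval) : ℝ) = 0 from rfl]
        exact hℓ0 i
      · rfl
    obtain ⟨V, hV, hVpc⟩ := exists_pc_nhds (E₁ := E₁) (1 : G')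
    have hκcent : ∀ i, ℓ i 1 ∈ Subgroup.center G' := fun i => hcent (hκker i)
    have htrivκ : Joined (trivTuple G' k) (⟨fun i => ℓ i 1, hκmem⟩ : commTuples G' k) :=
      joined_triv_central _ hκcent (fun i => joined_one_of_nhds hV hVpc _) hκmem
    exact mem_pathComponent_iff.mpr (htrivκ.trans hxκ.symm)
  · intro h
    have hj := joined_map (mem_pathComponent_iff.mp h) (continuous_pushMap p hp k)
    rw [pushMap_trivTuple] at hj
    exact mem_pathComponent_iff.mpr hj
end

section
/- Let G be a compact Lie group, K a finite subgroup of the center of G, and k ≥ 1. Let B_k(G,K) = {(x₁,…,x_k) ∈ G^k : x_i x_j x_i⁻¹ x_j⁻¹ ∈ K for all i,j} with the subspace topology from G^k, and give the quotient group G/K the quotient topology. Then the map B_k(G,K) → Hom(ℤ^k, G/K), (x₁,…,x_k) ↦ (x₁K,…,x_kK), is a surjective covering map, and any two points of B_k(G,K) in the same fiber differ by componentwise multiplication by an element of K^k. -/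
open CategoryTheory
open scoped Manifold
open scoped commutatorElement

/-- The space `Bₖ(G,K)` of `K`-almost commuting `k`-tuples in `G`. -/
def almostCommTuples (G : Type) [Group G] (K : Subgroup G) (k : ℕ) : Set (Fin k → G) :=
  {x | ∀ i j, x i * x j * (x i)⁻¹ * (x j)⁻¹ ∈ K}

/-- The map `Bₖ(G,K) → Hom(ℤᵏ, G/K)`, `(x₁,…,xₖ) ↦ (x₁K,…,xₖK)`. -/
def acQuotMap (G : Type) [Group G] (K : Subgroup G) [K.Normal] (k : ℕ) :
    almostCommTuples G K k → commTuples (G ⧸ K) k := fun x =>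
  ⟨fun i => (((x : Fin k → G) i : G) : G ⧸ K), fun i j => by
    have h1 : ⁅(((x : Fin k → G) i : G) : G ⧸ K), (((x : Fin k → G) j : G) : G ⧸ K)⁆ = 1 := by
      show ⁅QuotientGroup.mk' K ((x : Fin k → G) i), QuotientGroup.mk' K ((x : Fin k → G) j)⁆ = 1
      rw [← map_commutatorElement]
      exact (QuotientGroup.eq_one_iff _).mpr (x.2 i j)
    exact commutatorElement_eq_one_iff_commute.mp h1⟩

theorem mem_almostCommTuples_of_quot {G : Type} [Group G] (K : Subgroup G) [K.Normal] {k : ℕ}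
    (z : Fin k → G)
    (h : ∀ i j, ((z i : G ⧸ K)) * (z j : G ⧸ K) = (z j : G ⧸ K) * (z i : G ⧸ K)) :
    z ∈ almostCommTuples G K k := fun i j => by
  have h1 : ((z i * z j * (z i)⁻¹ * (z j)⁻¹ : G) : G ⧸ K) = 1 := by
    simp only [QuotientGroup.mk_mul, QuotientGroup.mk_inv]
    rw [h i j]
    group
  exact (QuotientGroup.eq_one_iff _).mp h1

theorem acQuotMap_surjective {G : Type} [Group G] (K : Subgroup G) [K.Normal] (k : ℕ) :
    Function.Surjective (acQuotMap G K k) := by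
  intro q
  choose x hx using fun i => QuotientGroup.mk_surjective ((q : Fin k → G ⧸ K) i)
  refine ⟨⟨x, mem_almostCommTuples_of_quot K x fun i j => ?_⟩, ?_⟩
  · rw [hx i, hx j]; exact q.2 i j
  · apply Subtype.ext; funext i; exact hx i

theorem acQuotMap_fiber {G : Type} [Group G] (K : Subgroup G) [K.Normal]
    (hcent : K ≤ Subgroup.center G) (k : ℕ)
    (x y : almostCommTuples G K k) (h : acQuotMap G K k x = acQuotMap G K k y) :
    ∃ c : Fin k → G, (∀ i, c i ∈ K) ∧
      ∀ i, ((y : Fin k → G) i) = c i * ((x : Fin k → G) i) := by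
  refine ⟨fun i => (y : Fin k → G) i * ((x : Fin k → G) i)⁻¹, fun i => ?_, fun i => by group⟩
  have h1 : (((x : Fin k → G) i : G) : G ⧸ K) = (((y : Fin k → G) i : G) : G ⧸ K) :=
    congrArg (fun q : commTuples (G ⧸ K) k => (q : Fin k → G ⧸ K) i) h
  have h2 : ((x : Fin k → G) i)⁻¹ * (y : Fin k → G) i ∈ K := QuotientGroup.eq.mp h1
  have h3 := Subgroup.mem_center_iff.mp (hcent h2) ((x : Fin k → G) i)
  show (y : Fin k → G) i * ((x : Fin k → G) i)⁻¹ ∈ K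
  have h4 : (y : Fin k → G) i * ((x : Fin k → G) i)⁻¹
      = (x : Fin k → G) i * (((x : Fin k → G) i)⁻¹ * (y : Fin k → G) i) * ((x : Fin k → G) i)⁻¹ := by
    group
  rw [h4, h3, mul_inv_cancel_right]
  exact h2

theorem isCoveringMap_acQuotMap {G : Type} [TopologicalSpace G] [Group G] [IsTopologicalGroup G]
    [T2Space G] (K : Subgroup G) [K.Normal] (hfin : (K : Set G).Finite)
    (hcent : K ≤ Subgroup.center G) (k : ℕ) :
    IsCoveringMap (acQuotMap G K k) := by
  classical
  haveI : Finite ↥K := by exact hfin.to_subtype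
  haveI : DiscreteTopology ↥K := inferInstance
  haveI : DiscreteTopology (Fin k → ↥K) := inferInstance
  set p := acQuotMap G K k with hp
  have hpcont : Continuous p := by
    apply Continuous.subtype_mk
    exact continuous_pi fun i =>
      QuotientGroup.continuous_mk.comp ((continuous_apply i).comp continuous_subtype_val)
  -- centrality helper
  have hc : ∀ c ∈ K, ∀ g : G, g * c = c * g := fun c hcK g =>
    Subgroup.mem_center_iff.mp (hcent hcK) g
  have hKc : ∀ a b : G, ((a : G ⧸ K) = (b : G ⧸ K)) → a * b⁻¹ ∈ K := by
    intro a b h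
    have h0 : a⁻¹ * b ∈ K := QuotientGroup.eq.mp h
    have h1 : b⁻¹ * a ∈ K := by simpa [mul_inv_rev] using K.inv_mem h0
    have h2 : a * b⁻¹ = b * (b⁻¹ * a) * b⁻¹ := by group
    rw [h2, hc _ h1 b, mul_inv_cancel_right]
    exact h1
  -- a small open set W around 1 meeting K only in 1
  obtain ⟨W, hWo, hW1, hWK⟩ : ∃ W : Set G, IsOpen W ∧ (1 : G) ∈ W ∧
      ∀ g ∈ W, g ∈ K → g = 1 := by
    refine ⟨((K : Set G) \ {1})ᶜ, (hfin.subset Set.diff_subset).isClosed.isOpen_compl,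
      fun h => h.2 rfl, fun g hg hgK => ?_⟩
    by_contra hne
    exact hg ⟨hgK, hne⟩
  obtain ⟨V₀, hV₀o, hV₀1, hV₀W⟩ := exists_open_nhds_one_mul_subset (hWo.mem_nhds hW1)
  set V : Set G := V₀ ∩ V₀⁻¹ with hVdef
  have hVo : IsOpen V := hV₀o.inter hV₀o.inv
  have hV1 : (1 : G) ∈ V := ⟨hV₀1, by simpa using hV₀1⟩
  have hVuniq : ∀ a ∈ V, ∀ b ∈ V, a * b⁻¹ ∈ K → a = b := by
    intro a ha b hb hab
    have hW : a * b⁻¹ ∈ W := hV₀W (Set.mul_mem_mul ha.1 (Set.mem_inv.mp hb.2))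
    exact mul_inv_eq_one.mp (hWK _ hW hab)
  -- now the pointwise evenly-covered statement
  intro q
  have hmain : IsEvenlyCovered p (q : commTuples (G ⧸ K) k) (Fin k → ↥K) := by
    suffices hT : ∃ t : Bundle.Trivialization (Fin k → ↥K) p, (q : commTuples (G ⧸ K) k) ∈ t.baseSet by
      obtain ⟨t, ht⟩ := hT
      exact IsEvenlyCovered.of_trivialization ht
    -- choose a lift of q
    choose x hxq using fun i => QuotientGroup.mk_surjective ((q : Fin k → G ⧸ K) i)
    have hxZ : x ∈ almostCommTuples G K k := by
      refine mem_almostCommTuples_of_quot K x fun i j => ?_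
      rw [hxq i, hxq j]; exact q.2 i j
    set Xi : Fin k → Set G := fun i => (fun g => (x i)⁻¹ * g) ⁻¹' V with hXidef
    have hXio : ∀ i, IsOpen (Xi i) := fun i => hVo.preimage (continuous_mul_left _)
    have hxXi : ∀ i, x i ∈ Xi i := fun i => by
      show (x i)⁻¹ * x i ∈ V
      rw [inv_mul_cancel]; exact hV1
    -- key uniqueness of decompositions c * g with c ∈ K, g ∈ Xi i
    have hu : ∀ (i : Fin k) (c c' : G), c ∈ K → c' ∈ K → ∀ g ∈ Xi i, ∀ g' ∈ Xi i,
        c * g = c' * g' → c = c' ∧ g = g' := by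
      intro i c c' hcK hc'K g hg g' hg' heq
      have hvV : (x i)⁻¹ * g ∈ V := hg
      have hv'V : (x i)⁻¹ * g' ∈ V := hg'
      have h1 : ((x i)⁻¹ * g) * c = ((x i)⁻¹ * g') * c' := by
        have h2 : g * c = g' * c' := by rw [hc c hcK g, hc c' hc'K g', heq]
        calc ((x i)⁻¹ * g) * c = (x i)⁻¹ * (g * c) := by group
          _ = (x i)⁻¹ * (g' * c') := by rw [h2]
          _ = ((x i)⁻¹ * g') * c' := by group
      have hdK : c' * c⁻¹ ∈ K := K.mul_mem hc'K (K.inv_mem hcK)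
      have hvv : ((x i)⁻¹ * g) * ((x i)⁻¹ * g')⁻¹ = c' * c⁻¹ := by
        have h4 : (x i)⁻¹ * g = ((x i)⁻¹ * g') * (c' * c⁻¹) := by
          rw [← mul_assoc]; exact eq_mul_inv_of_mul_eq h1
        calc ((x i)⁻¹ * g) * ((x i)⁻¹ * g')⁻¹
            = ((c' * c⁻¹) * ((x i)⁻¹ * g')) * ((x i)⁻¹ * g')⁻¹ := by
              rw [h4, hc _ hdK ((x i)⁻¹ * g')]
          _ = c' * c⁻¹ := mul_inv_cancel_right _ _
      have hveq : (x i)⁻¹ * g = (x i)⁻¹ * g' := hVuniq _ hvV _ hv'V (hvv ▸ hdK)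
      have hgeq : g = g' := mul_left_cancel hveq
      refine ⟨?_, hgeq⟩
      rw [hgeq] at heq
      exact mul_right_cancel heq
    -- the local sections σ and the "which sheet" functions κ
    set σ : Fin k → G ⧸ K → G := fun i b =>
      if h : ∃ g, g ∈ Xi i ∧ ((g : G ⧸ K)) = b then h.choose else x i with hσdef
    have hσ : ∀ i b, (∃ g, g ∈ Xi i ∧ ((g : G ⧸ K)) = b) →
        σ i b ∈ Xi i ∧ ((σ i b : G) : G ⧸ K) = b := by
      intro i b h
      have : σ i b = h.choose := by rw [hσdef]; exact dif_pos h
      rw [this]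
      exact h.choose_spec
    have hσu : ∀ i b g, g ∈ Xi i → ((g : G ⧸ K)) = b → σ i b = g := by
      intro i b g hgXi hgb
      obtain ⟨h1, h2⟩ := hσ i b ⟨g, hgXi, hgb⟩
      have h3 : σ i b * g⁻¹ ∈ K := hKc _ _ (by rw [h2, hgb])
      have h4 : (1 : G) * σ i b = (σ i b * g⁻¹) * g := by group
      exact ((hu i 1 (σ i b * g⁻¹) K.one_mem h3 (σ i b) h1 g hgXi h4).2)
    set κ : Fin k → G → ↥K := fun i g =>
      if h : ∃ c : ↥K, (c : G)⁻¹ * g ∈ Xi i then h.choose else 1 with hκdef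
    have hκu : ∀ (i : Fin k) (g : G) (c : ↥K), (c : G)⁻¹ * g ∈ Xi i → κ i g = c := by
      intro i g c hcg
      have hex : ∃ c : ↥K, (c : G)⁻¹ * g ∈ Xi i := ⟨c, hcg⟩
      have hval : κ i g = hex.choose := by rw [hκdef]; exact dif_pos hex
      have hspec : ((κ i g : G))⁻¹ * g ∈ Xi i := by rw [hval]; exact hex.choose_spec
      have heq : (κ i g : G) * (((κ i g : G))⁻¹ * g) = (c : G) * ((c : G)⁻¹ * g) := by
        rw [mul_inv_cancel_left, mul_inv_cancel_left]
      exact Subtype.ext (hu i _ _ (κ i g).2 c.2 _ hspec _ hcg heq).1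
    -- the base set
    set U : Set ↥(commTuples (G ⧸ K) k) :=
      {b | ∀ i, ∃ g, g ∈ Xi i ∧ ((g : G ⧸ K)) = (b : Fin k → G ⧸ K) i} with hUdef
    have hUo : IsOpen U := by
      have hU2 : U = Subtype.val ⁻¹'
          (⋂ i, (fun b : Fin k → G ⧸ K => b i) ⁻¹' ((fun g : G => (g : G ⧸ K)) '' Xi i)) := by
        ext b
        simp [hUdef, Set.mem_iInter, Set.mem_image]
      rw [hU2]
      refine (isOpen_iInter_of_finite fun i => ?_).preimage continuous_subtype_val
      exact (QuotientGroup.isOpenMap_coe _ (hXio i)).preimage (continuous_apply i)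
    have hqU : q ∈ U := fun i => ⟨x i, hxXi i, hxq i⟩
    -- forward and inverse maps
    set Ft : ↥(almostCommTuples G K k) → ↥(commTuples (G ⧸ K) k) × (Fin k → ↥K) :=
      fun z => (p z, fun i => κ i ((z : Fin k → G) i)) with hFtdef
    have hqmul : ∀ (b : ↥(commTuples (G ⧸ K) k)) (cc : Fin k → ↥K),
        (∀ i, ((σ i ((b : Fin k → G ⧸ K) i) : G) : G ⧸ K) = (b : Fin k → G ⧸ K) i) →
        ∀ i, (((cc i : G) * σ i ((b : Fin k → G ⧸ K) i) : G) : G ⧸ K)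
          = (b : Fin k → G ⧸ K) i := by
      intro b cc hb i
      rw [QuotientGroup.mk_mul, (QuotientGroup.eq_one_iff _).mpr (cc i).2, one_mul, hb i]
    set Fi : ↥(commTuples (G ⧸ K) k) × (Fin k → ↥K) → ↥(almostCommTuples G K k) :=
      fun w =>
        if hb : ∀ i, ((σ i ((w.1 : Fin k → G ⧸ K) i) : G) : G ⧸ K) = (w.1 : Fin k → G ⧸ K) i
        then ⟨fun i => (w.2 i : G) * σ i ((w.1 : Fin k → G ⧸ K) i),
          mem_almostCommTuples_of_quot K _ (by
            intro i j
            rw [hqmul w.1 w.2 hb i, hqmul w.1 w.2 hb j]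
            exact w.1.2 i j)⟩
        else ⟨x, hxZ⟩ with hFidef
    have hUb : ∀ b : ↥(commTuples (G ⧸ K) k), b ∈ U →
        ∀ i, ((σ i ((b : Fin k → G ⧸ K) i) : G) : G ⧸ K) = (b : Fin k → G ⧸ K) i :=
      fun b hb i => (hσ i _ (hb i)).2
    have hUbXi : ∀ b : ↥(commTuples (G ⧸ K) k), b ∈ U →
        ∀ i, σ i ((b : Fin k → G ⧸ K) i) ∈ Xi i :=
      fun b hb i => (hσ i _ (hb i)).1
    have hFival : ∀ w : ↥(commTuples (G ⧸ K) k) × (Fin k → ↥K), w.1 ∈ U →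
        (Fi w : Fin k → G) = fun i => (w.2 i : G) * σ i ((w.1 : Fin k → G ⧸ K) i) := by
      intro w hw
      rw [hFidef]
      simp only [dif_pos (hUb w.1 hw)]
    have hpFi : ∀ w : ↥(commTuples (G ⧸ K) k) × (Fin k → ↥K), w.1 ∈ U → p (Fi w) = w.1 := by
      intro w hw
      apply Subtype.ext
      funext i
      show (((Fi w : Fin k → G) i : G) : G ⧸ K) = (w.1 : Fin k → G ⧸ K) i
      rw [hFival w hw]
      exact hqmul w.1 w.2 (hUb w.1 hw) i
    -- membership of source
    have hsrc : ∀ z : ↥(almostCommTuples G K k), z ∈ p ⁻¹' U →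
        ∀ i, ∃ g, g ∈ Xi i ∧ ((g : G ⧸ K)) = (((z : Fin k → G) i : G) : G ⧸ K) :=
      fun z hz i => hz i
    -- the trivialization
    refine ⟨⟨⟨⟨⟨Ft, Fi, p ⁻¹' U, U ×ˢ Set.univ, ?_, ?_, ?_, ?_⟩, ?_, ?_⟩,
      hUo.preimage hpcont, hUo.prod isOpen_univ⟩,
      U, hUo, rfl, rfl, fun z _ => rfl⟩, hqU⟩
    · -- map_source
      exact fun z hz => ⟨hz, Set.mem_univ _⟩
    · -- map_target
      intro w hw
      show p (Fi w) ∈ U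
      rw [hpFi w hw.1]
      exact hw.1
    · -- left_inv
      intro z hz
      have hb : ∀ i, ((σ i (((Ft z).1 : Fin k → G ⧸ K) i) : G) : G ⧸ K)
          = ((Ft z).1 : Fin k → G ⧸ K) i := hUb _ hz
      apply Subtype.ext
      rw [hFival (Ft z) hz]
      funext i
      show (κ i ((z : Fin k → G) i) : G) * σ i (((z : Fin k → G) i : G ⧸ K)) = (z : Fin k → G) i
      obtain ⟨g, hgXi, hgq⟩ := hsrc z hz i
      have hcK : (z : Fin k → G) i * g⁻¹ ∈ K := hKc _ _ hgq.symm
      have hcg : ((⟨_, hcK⟩ : ↥K) : G)⁻¹ * (z : Fin k → G) i ∈ Xi i := by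
        show ((z : Fin k → G) i * g⁻¹)⁻¹ * (z : Fin k → G) i ∈ Xi i
        have : ((z : Fin k → G) i * g⁻¹)⁻¹ * (z : Fin k → G) i = g := by group
        rw [this]; exact hgXi
      rw [hκu i _ _ hcg, hσu i _ g hgXi hgq]
      show (z : Fin k → G) i * g⁻¹ * g = (z : Fin k → G) i
      group
    · -- right_inv
      rintro ⟨b, cc⟩ hw
      have hbU : b ∈ U := hw.1
      have hFiv := hFival (b, cc) hbU
      apply Prod.ext
      · exact hpFi (b, cc) hbU
      · show (fun i => κ i ((Fi (b, cc) : Fin k → G) i)) = cc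
        funext i
        rw [hFiv]
        refine hκu i _ (cc i) ?_
        show (cc i : G)⁻¹ * ((cc i : G) * σ i ((b : Fin k → G ⧸ K) i)) ∈ Xi i
        rw [inv_mul_cancel_left]
        exact hUbXi b hbU i
    · -- continuousOn_toFun
      apply ContinuousOn.prodMk
      · exact hpcont.continuousOn
      · apply continuousOn_pi.mpr
        intro i
        have hκcont : ContinuousOn (κ i) {g : G | ∃ c : ↥K, (c : G)⁻¹ * g ∈ Xi i} := by
          intro g hg
          obtain ⟨c, hcg⟩ := hg
          apply ContinuousAt.continuousWithinAt
          have hNopen : IsOpen {h : G | (c : G)⁻¹ * h ∈ Xi i} :=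
            (hXio i).preimage (continuous_mul_left _)
          have hev : κ i =ᶠ[nhds g] fun _ => c :=
            Filter.eventuallyEq_of_mem (hNopen.mem_nhds hcg) fun g' hg' => hκu i g' c hg'
          exact ContinuousAt.congr continuousAt_const hev.symm
        refine hκcont.comp (((continuous_apply i).comp continuous_subtype_val).continuousOn) ?_
        intro z hz
        obtain ⟨g, hgXi, hgq⟩ := hsrc z hz i
        refine ⟨⟨_, hKc _ _ hgq.symm⟩, ?_⟩
        show ((z : Fin k → G) i * g⁻¹)⁻¹ * (z : Fin k → G) i ∈ Xi i
        have : ((z : Fin k → G) i * g⁻¹)⁻¹ * (z : Fin k → G) i = g := by group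
        rw [this]; exact hgXi
    · -- continuousOn_invFun
      rw [Topology.IsInducing.subtypeVal.continuousOn_iff]
      have hnice : ContinuousOn
          (fun w : ↥(commTuples (G ⧸ K) k) × (Fin k → ↥K) =>
            fun i => (w.2 i : G) * σ i ((w.1 : Fin k → G ⧸ K) i)) (U ×ˢ Set.univ) := by
        apply continuousOn_pi.mpr
        intro i
        apply ContinuousOn.mul
        · exact (continuous_subtype_val.comp ((continuous_apply i).comp continuous_snd)).continuousOn
        · have hσcont : ContinuousOn (σ i) ((fun g : G => (g : G ⧸ K)) '' Xi i) := by
            rw [continuousOn_iff']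
            intro O hO
            refine ⟨(fun g : G => (g : G ⧸ K)) '' (O ∩ Xi i),
              QuotientGroup.isOpenMap_coe _ (hO.inter (hXio i)), ?_⟩
            ext b
            constructor
            · rintro ⟨hbO, hbXi⟩
              obtain ⟨g, hgXi, hgb⟩ := hbXi
              obtain ⟨h1, h2⟩ := hσ i b ⟨g, hgXi, hgb⟩
              exact ⟨⟨σ i b, ⟨hbO, h1⟩, h2⟩, ⟨g, hgXi, hgb⟩⟩
            · rintro ⟨⟨g, ⟨hgO, hgXi⟩, hgb⟩, hbXi⟩
              refine ⟨?_, hbXi⟩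
              show σ i b ∈ O
              rw [hσu i b g hgXi hgb]
              exact hgO
          refine hσcont.comp
            (((continuous_apply i).comp (continuous_subtype_val.comp continuous_fst)).continuousOn) ?_
          rintro ⟨b, cc⟩ hw
          obtain ⟨g, hgXi, hgb⟩ := hw.1 i
          exact ⟨g, hgXi, hgb⟩
      refine hnice.congr ?_
      rintro ⟨b, cc⟩ hw
      exact hFival (b, cc) hw.1
  exact hmain.to_isEvenlyCovered_preimage

theorem t1Space_of_chartedSpace {E : Type} [NormedAddCommGroup E] {G : Type}
    [TopologicalSpace G] [ChartedSpace E G] : T1Space G := by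
  refine t1Space_iff_exists_open.mpr fun x y hxy => ?_
  by_cases hy : y ∈ (chartAt E x).source
  · have hne : chartAt E x x ≠ chartAt E x y := fun h =>
      hxy ((chartAt E x).injOn (mem_chart_source E x) hy h)
    obtain ⟨O, hOo, hxO, hyO⟩ := t1Space_iff_exists_open.mp inferInstance hne
    refine ⟨(chartAt E x).source ∩ chartAt E x ⁻¹' O, ?_, ⟨mem_chart_source E x, hxO⟩, ?_⟩
    · exact (chartAt E x).continuousOn.isOpen_inter_preimage (chartAt E x).open_source hOo
    · rintro ⟨-, h2⟩; exact hyO h2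
  · exact ⟨(chartAt E x).source, (chartAt E x).open_source, mem_chart_source E x, hy⟩


/-- For a compact Lie group `G`, a finite subgroup `K` of the center of
`G` and `k ≥ 1`, the map `Bₖ(G,K) → Hom(ℤᵏ,G/K)` is a surjective covering map, and
points in the same fiber differ by componentwise multiplication by an element of `Kᵏ`. -/
theorem stmt18 {E : Type} [NormedAddCommGroup E] [NormedSpace ℝ E] [FiniteDimensional ℝ E]
    {G : Type} [TopologicalSpace G] [ChartedSpace E G] [Group G] [IsTopologicalGroup G]
    [LieGroup 𝓘(ℝ, E) (⊤ : ℕ∞) G] [CompactSpace G] (K : Subgroup G) (hfin : (K : Set G).Finite)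
    (hcent : K ≤ Subgroup.center G) (k : ℕ) (hk : 1 ≤ k) :
    letI : K.Normal := ⟨fun n hn g => by
      rw [Subgroup.mem_center_iff.mp (hcent hn) g, mul_inv_cancel_right]; exact hn⟩
    IsCoveringMap (acQuotMap G K k) ∧
    Function.Surjective (acQuotMap G K k) ∧
    ∀ x y : almostCommTuples G K k, acQuotMap G K k x = acQuotMap G K k y →
      ∃ c : Fin k → G, (∀ i, c i ∈ K) ∧
        ∀ i, ((y : Fin k → G) i) = c i * ((x : Fin k → G) i) := by
  haveI : T1Space G := t1Space_of_chartedSpace (E := E)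
  haveI : T2Space G := IsTopologicalGroup.t2Space_iff_one_closed.mpr isClosed_singleton
  letI : K.Normal := ⟨fun n hn g => by
    rw [Subgroup.mem_center_iff.mp (hcent hn) g, mul_inv_cancel_right]; exact hn⟩
  exact ⟨isCoveringMap_acQuotMap K hfin hcent k, acQuotMap_surjective K k,
    fun x y h => acQuotMap_fiber K hcent k x y h⟩
end
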